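/- arXiv:1602.08627 — 11 statements merged into one kernel-verified Lean document; each statement's English description precedes it below -/
import Mathlib

section
/- In a pointed category with finite limits, for a morphism i : I → Y the following are equivalent: (i) i is a monomorphism; (ii) i is the zero-class of a left split relation; (iii) i is the zero-class of a relation. -/
open CategoryTheory CategoryTheory.Limits

universe v u

variable {C : Type u} [Category.{v} C]

/-- `i : I ⟶ Y` is a zero-class of the span `(d : R ⟶ X, c : R ⟶ Y)`:
it fits in a pullback of `⟨d,c⟩` along `⟨0, 1_Y⟩`. -/
def IsZeroClass [HasZeroMorphisms C] [HasBinaryProducts C]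
    {R X Y I : C} (d : R ⟶ X) (c : R ⟶ Y) (i : I ⟶ Y) : Prop :=
  ∃ l : I ⟶ R, IsPullback l i (prod.lift d c) (prod.lift (0 : Y ⟶ X) (𝟙 Y))

open ZeroObject

lemma mono_of_zeroClass [HasZeroMorphisms C] [HasBinaryProducts C]
    {R X Y I : C} {d : R ⟶ X} {c : R ⟶ Y} {i : I ⟶ Y}
    (hm : Mono (prod.lift d c)) (hz : IsZeroClass d c i) : Mono i := by
  obtain ⟨l, h⟩ := hz
  exact PullbackCone.mono_snd_of_is_pullback_of_mono h.isLimit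

lemma zeroClass_of_mono [HasZeroObject C] [HasZeroMorphisms C] [HasBinaryProducts C]
    {I Y : C} (i : I ⟶ Y) [Mono i] :
    IsZeroClass (0 : I ⟶ (0 : C)) i i := by
  refine ⟨𝟙 I, ?_⟩
  have w : CommSq (𝟙 I) i (prod.lift (0 : I ⟶ (0:C)) i) (prod.lift (0 : Y ⟶ (0:C)) (𝟙 Y)) := by
    constructor
    apply Limits.prod.hom_ext <;> simp
  refine IsPullback.of_isLimit' w ?_
  refine PullbackCone.IsLimit.mk _ (fun s => s.fst) ?_ ?_ ?_
  · intro s; simp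
  · intro s
    have h1 := congrArg (· ≫ prod.snd) s.condition
    simpa only [Category.assoc, prod.lift_snd, Category.comp_id] using h1
  · intro s m hm1 hm2
    simpa using hm1

/-- In a pointed category with finite limits, for a morphism `i : I ⟶ Y` the following are
equivalent: (i) `i` is a monomorphism; (ii) `i` is the zero-class of a left split relation;
(iii) `i` is the zero-class of a relation. -/
theorem mono_iff_zeroClass {C : Type u} [Category.{v} C]
    [HasZeroObject C] [HasZeroMorphisms C] [HasFiniteLimits C]
    {I Y : C} (i : I ⟶ Y) :
    (Mono i ↔
      ∃ (X R : C) (d : R ⟶ X) (c : R ⟶ Y) (e : X ⟶ R),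
        Mono (prod.lift d c) ∧ e ≫ d = 𝟙 X ∧ IsZeroClass d c i) ∧
    (Mono i ↔
      ∃ (X R : C) (d : R ⟶ X) (c : R ⟶ Y),
        Mono (prod.lift d c) ∧ IsZeroClass d c i) := by
  have fwd : Mono i → ∃ (X R : C) (d : R ⟶ X) (c : R ⟶ Y) (e : X ⟶ R),
      Mono (prod.lift d c) ∧ e ≫ d = 𝟙 X ∧ IsZeroClass d c i := by
    intro hi
    refine ⟨0, I, 0, i, 0, ?_, ?_, zeroClass_of_mono i⟩
    · have : prod.lift (0 : I ⟶ (0:C)) i ≫ prod.snd = i := prod.lift_snd _ _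
      exact mono_of_mono_fac this
    · exact (Limits.isZero_zero C).eq_of_tgt _ _
  constructor
  · exact ⟨fwd, fun ⟨X, R, d, c, e, hm, _, hz⟩ => mono_of_zeroClass hm hz⟩
  · exact ⟨fun hi => by obtain ⟨X, R, d, c, e, hm, _, hz⟩ := fwd hi; exact ⟨X, R, d, c, hm, hz⟩,
      fun ⟨X, R, d, c, hm, hz⟩ => mono_of_zeroClass hm hz⟩
end

section
/- In a pointed category with finite limits, clots are stable under pullback: if k : K → X is a clot and f : Y → X is any morphism, then the pullback k' : K' → Y of k along f is a clot. -/
open CategoryTheory CategoryTheory.Limits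

universe v u

variable {C : Type u} [Category.{v} C]

/-- `k : K ⟶ X` is a clot: a monomorphism which is the zero-class of a reflexive
relation on `X`. -/
def IsClot [HasZeroMorphisms C] [HasBinaryProducts C] {K X : C} (k : K ⟶ X) : Prop :=
  Mono k ∧ ∃ (R : C) (d c : R ⟶ X) (e : X ⟶ R),
    Mono (prod.lift d c) ∧ e ≫ d = 𝟙 X ∧ e ≫ c = 𝟙 X ∧ IsZeroClass d c k

/-- In a pointed category with finite limits, clots are stable under pullback: if
`k : K ⟶ X` is a clot and `f : Y ⟶ X` is any morphism, then the pullback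
`k' : K' ⟶ Y` of `k` along `f` is a clot. -/
theorem isClot_of_isPullback {C : Type u} [Category.{v} C]
    [HasZeroObject C] [HasZeroMorphisms C] [HasFiniteLimits C]
    {K X Y K' : C} (k : K ⟶ X) (f : Y ⟶ X) (g : K' ⟶ K) (k' : K' ⟶ Y)
    (h : IsPullback g k' k f) (hk : IsClot k) :
    IsClot k' := by
  obtain ⟨hmk, R, d, c, e, hm, hed, hec, l, hl⟩ := hk
  -- `k'` is a mono, being a pullback of the mono `k`
  have hmk' : Mono k' := PullbackCone.mono_snd_of_is_pullback_of_mono h.isLimit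
  -- pull back the relation `⟨d,c⟩ : R ⟶ X ⨯ X` along `f ⨯ f : Y ⨯ Y ⟶ X ⨯ X`
  set m : R ⟶ X ⨯ X := prod.lift d c with hmdef
  let R' : C := pullback m (prod.map f f)
  let p : R' ⟶ R := pullback.fst m (prod.map f f)
  let m' : R' ⟶ Y ⨯ Y := pullback.snd m (prod.map f f)
  have hR : IsPullback p m' m (prod.map f f) := IsPullback.of_hasPullback _ _
  let d' : R' ⟶ Y := m' ≫ prod.fst
  let c' : R' ⟶ Y := m' ≫ prod.snd
  have hm'eq : prod.lift d' c' = m' := by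
    simp [d', c', ← prod.comp_lift]
  -- reflexivity
  have hcomm : (f ≫ e) ≫ m = prod.lift (𝟙 Y) (𝟙 Y) ≫ prod.map f f := by
    ext
    · simp only [hmdef, Category.assoc, prod.lift_fst, prod.lift_map, Category.id_comp]
      rw [hed, Category.comp_id]
    · simp only [hmdef, Category.assoc, prod.lift_snd, prod.lift_map, Category.id_comp]
      rw [hec, Category.comp_id]
  let e' : Y ⟶ R' := pullback.lift (f ≫ e) (prod.lift (𝟙 Y) (𝟙 Y)) hcomm
  have he'm' : e' ≫ m' = prod.lift (𝟙 Y) (𝟙 Y) := pullback.lift_snd _ _ _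
  refine ⟨hmk', R', d', c', e', ?_, ?_, ?_, ?_⟩
  · rw [hm'eq]
    exact pullback.snd_of_mono
  · simp [d', reassoc_of% he'm']
    exact prod.lift_fst _ _
  · simp [c', reassoc_of% he'm']
    exact prod.lift_snd _ _
  · -- the big pasted square
    have hbig : IsPullback (g ≫ l) k' m
        (prod.lift (0 : Y ⟶ Y) (𝟙 Y) ≫ prod.map f f) := by
      have : prod.lift (0 : Y ⟶ Y) (𝟙 Y) ≫ prod.map f f
          = f ≫ prod.lift (0 : X ⟶ X) (𝟙 X) := by ext <;> simp
      rw [this]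
      exact h.paste_horiz hl
    exact ⟨_, by rw [hm'eq]; exact IsPullback.of_right' hbig hR⟩
end

section
/- In a pointed category with finite limits, an intersection of two clots is a clot: if k : K → X and l : L → X are clots, then the subobject K∩L → X obtained as the pullback of k and l is a clot. -/
open CategoryTheory CategoryTheory.Limits

universe v u

variable {C : Type u} [Category.{v} C]

/-- In a pointed category with finite limits, an intersection of two clots is a clot:
if `k : K ⟶ X` and `l : L ⟶ X` are clots, then the subobject `K ∩ L → X`, obtained as
(the diagonal of) the pullback of `k` and `l`, is a clot. -/
theorem isClot_intersection {C : Type u} [Category.{v} C]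
    [HasZeroObject C] [HasZeroMorphisms C] [HasFiniteLimits C]
    {K L X P : C} (k : K ⟶ X) (l : L ⟶ X) (a : P ⟶ K) (b : P ⟶ L)
    (h : IsPullback a b k l) (hk : IsClot k) (hl : IsClot l) :
    IsClot (a ≫ k) := by
  obtain ⟨kmono, R₁, d₁, c₁, e₁, m₁, he₁d, he₁c, l₁, hpb₁⟩ := hk
  obtain ⟨lmono, R₂, d₂, c₂, e₂, m₂, he₂d, he₂c, l₂, hpb₂⟩ := hl
  -- `a ≫ k` is a monomorphism
  have monoak : Mono (a ≫ k) := by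
    constructor
    intro T x y hxy
    have hxa : x ≫ a = y ≫ a := by
      apply (cancel_mono k).1
      simpa using hxy
    have hxb : x ≫ b = y ≫ b := by
      apply (cancel_mono l).1
      rw [Category.assoc, Category.assoc, ← h.w, ← Category.assoc, ← Category.assoc, hxa]
    exact h.hom_ext hxa hxb
  refine ⟨monoak, pullback (prod.lift d₁ c₁) (prod.lift d₂ c₂),
    pullback.fst _ _ ≫ d₁, pullback.fst _ _ ≫ c₁,
    pullback.lift e₁ e₂ (by rw [prod.comp_lift, prod.comp_lift, he₁d, he₁c, he₂d, he₂c]),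
    ?_, ?_, ?_, ?_⟩
  · -- mono of the pair
    rw [← prod.comp_lift]
    exact mono_comp _ _
  · rw [← Category.assoc, pullback.lift_fst]; exact he₁d
  · rw [← Category.assoc, pullback.lift_fst]; exact he₁c
  · -- zero class
    have hm : (a ≫ l₁) ≫ prod.lift d₁ c₁ = (b ≫ l₂) ≫ prod.lift d₂ c₂ := by
      rw [Category.assoc, Category.assoc, hpb₁.w, hpb₂.w, ← Category.assoc, ← Category.assoc,
        h.w]
    refine ⟨pullback.lift (a ≫ l₁) (b ≫ l₂) hm, ?_⟩
    have hdc : prod.lift (pullback.fst (prod.lift d₁ c₁) (prod.lift d₂ c₂) ≫ d₁)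
        (pullback.fst (prod.lift d₁ c₁) (prod.lift d₂ c₂) ≫ c₁)
        = pullback.fst _ _ ≫ prod.lift d₁ c₁ := by rw [prod.comp_lift]
    have comm : pullback.lift (a ≫ l₁) (b ≫ l₂) hm ≫
        prod.lift (pullback.fst (prod.lift d₁ c₁) (prod.lift d₂ c₂) ≫ d₁)
          (pullback.fst (prod.lift d₁ c₁) (prod.lift d₂ c₂) ≫ c₁)
        = (a ≫ k) ≫ prod.lift (0 : X ⟶ X) (𝟙 X) := by
      rw [hdc, ← Category.assoc, pullback.lift_fst, Category.assoc, hpb₁.w,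
        ← Category.assoc, Category.assoc]
    -- lifts for the universal property
    have hu : ∀ s : PullbackCone
        (prod.lift (pullback.fst (prod.lift d₁ c₁) (prod.lift d₂ c₂) ≫ d₁)
          (pullback.fst (prod.lift d₁ c₁) (prod.lift d₂ c₂) ≫ c₁))
        (prod.lift (0 : X ⟶ X) (𝟙 X)),
        (s.fst ≫ pullback.fst _ _) ≫ prod.lift d₁ c₁
          = s.snd ≫ prod.lift (0 : X ⟶ X) (𝟙 X) := fun s => by
      rw [Category.assoc, ← hdc]; exact s.condition
    have hv : ∀ s : PullbackCone
        (prod.lift (pullback.fst (prod.lift d₁ c₁) (prod.lift d₂ c₂) ≫ d₁)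
          (pullback.fst (prod.lift d₁ c₁) (prod.lift d₂ c₂) ≫ c₁))
        (prod.lift (0 : X ⟶ X) (𝟙 X)),
        (s.fst ≫ pullback.snd _ _) ≫ prod.lift d₂ c₂
          = s.snd ≫ prod.lift (0 : X ⟶ X) (𝟙 X) := fun s => by
      rw [Category.assoc, ← pullback.condition, ← Category.assoc]; exact hu s
    have hw : ∀ s, (hpb₁.lift (s.fst ≫ pullback.fst _ _) s.snd (hu s)) ≫ k
        = (hpb₂.lift (s.fst ≫ pullback.snd _ _) s.snd (hv s)) ≫ l := by
      intro s
      rw [hpb₁.lift_snd, hpb₂.lift_snd]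
    refine IsPullback.of_isLimit (PullbackCone.IsLimit.mk comm
      (fun s => h.lift (hpb₁.lift (s.fst ≫ pullback.fst _ _) s.snd (hu s))
        (hpb₂.lift (s.fst ≫ pullback.snd _ _) s.snd (hv s)) (hw s))
      (fun s => ?_) (fun s => ?_) (fun s w hw1 hw2 => ?_))
    · beta_reduce
      apply pullback.hom_ext
      · rw [Category.assoc, pullback.lift_fst, ← Category.assoc, h.lift_fst, hpb₁.lift_fst]
      · rw [Category.assoc, pullback.lift_snd, ← Category.assoc, h.lift_snd, hpb₂.lift_fst]
    · beta_reduce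
      rw [← Category.assoc, h.lift_fst, hpb₁.lift_snd]
    · beta_reduce
      apply (cancel_mono (a ≫ k)).1
      rw [hw2, ← Category.assoc, h.lift_fst, hpb₁.lift_snd]
end

section
/- In a pointed regular category, every kernel (a morphism that is a kernel of some morphism) is a clot, and every clot is an ideal. -/
open CategoryTheory CategoryTheory.Limits

universe v u

variable {C : Type u} [Category.{v} C]

/-- `i : I ⟶ Y` is an ideal: a monomorphism which is the regular image of a clot,
i.e. there are a clot `k : K ⟶ X` and regular epimorphisms `p : X ⟶ Y`, `q : K ⟶ I`
with `i ∘ q = p ∘ k`. -/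
def IsIdeal [HasZeroMorphisms C] [HasBinaryProducts C] {I Y : C} (i : I ⟶ Y) : Prop :=
  Mono i ∧ ∃ (K X : C) (k : K ⟶ X) (p : X ⟶ Y) (q : K ⟶ I),
    IsClot k ∧ Nonempty (RegularEpi p) ∧ Nonempty (RegularEpi q) ∧ q ≫ i = k ≫ p

/-- A regular category: finitely complete, with coequalizers of kernel pairs,
and regular epimorphisms stable under pullback. -/
class RegularCategory (C : Type u) [Category.{v} C] extends HasFiniteLimits C : Prop where
  hasCoequalizerOfKernelPair : ∀ {X Y : C} (f : X ⟶ Y),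
    HasCoequalizer (pullback.fst f f) (pullback.snd f f)
  regularEpiStable : ∀ {P X Y Z : C} (f : X ⟶ Z) (g : Y ⟶ Z) (fst : P ⟶ X) (snd : P ⟶ Y),
    IsPullback fst snd f g → Nonempty (RegularEpi f) → Nonempty (RegularEpi snd)

/-- In a pointed regular category, every kernel is a clot and every clot is an ideal. -/
theorem kernel_isClot_and_clot_isIdeal {C : Type u} [Category.{v} C]
    [HasZeroObject C] [HasZeroMorphisms C] [RegularCategory C] :
    (∀ (K X X' : C) (k : K ⟶ X) (f : X ⟶ X') (w : k ≫ f = 0),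
      IsLimit (KernelFork.ofι k w) → IsClot k) ∧
    (∀ (K X : C) (k : K ⟶ X), IsClot k → IsIdeal k) := by

  constructor
  · intro K X X' k f w hk
    have hmono : Mono k := by
      constructor
      intro T a b hab
      have hfac : ∀ (t : T ⟶ K), (t ≫ k) ≫ f = 0 := by
        intro t; rw [Category.assoc, w, comp_zero]
      have := Fork.IsLimit.hom_ext hk (by simpa using hab)
      exact this
    refine ⟨hmono, pullback f f, pullback.fst f f, pullback.snd f f,
      pullback.lift (𝟙 X) (𝟙 X) rfl, ?_, pullback.lift_fst _ _ _, pullback.lift_snd _ _ _, ?_⟩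
    · constructor
      intro T a b hab
      apply pullback.hom_ext
      · have := hab =≫ prod.fst; simp at this; rwa [prod.lift_fst, prod.lift_fst] at this
      · have := hab =≫ prod.snd; simp at this; rwa [prod.lift_snd, prod.lift_snd] at this
    · refine ⟨pullback.lift 0 k (by simp [w]), ?_⟩
      have comm : CommSq (pullback.lift 0 k (by simp [w]) : K ⟶ pullback f f) k
          (prod.lift (pullback.fst f f) (pullback.snd f f)) (prod.lift (0 : X ⟶ X) (𝟙 X)) :=
        ⟨by
          apply Limits.prod.hom_ext
          · rw [Category.assoc, Category.assoc, prod.lift_fst, prod.lift_fst, pullback.lift_fst, comp_zero]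
          · rw [Category.assoc, Category.assoc, prod.lift_snd, prod.lift_snd, pullback.lift_snd, Category.comp_id]⟩
      apply IsPullback.of_isLimit' comm
      have hsnd : ∀ s : PullbackCone (prod.lift (pullback.fst f f) (pullback.snd f f))
          (prod.lift (0 : X ⟶ X) (𝟙 X)), s.snd ≫ f = 0 := by
        intro s
        have h1 : s.fst ≫ pullback.fst f f = 0 := by
          have := s.condition =≫ prod.fst; simp at this; rwa [prod.lift_fst, prod.lift_fst] at this
        have h2 : s.fst ≫ pullback.snd f f = s.snd := by
          have := s.condition =≫ prod.snd; simp at this; rwa [prod.lift_snd, prod.lift_snd] at this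
        calc s.snd ≫ f = s.fst ≫ pullback.snd f f ≫ f := by rw [← h2, Category.assoc]
          _ = s.fst ≫ pullback.fst f f ≫ f := by rw [pullback.condition]
          _ = 0 := by rw [← Category.assoc, h1, zero_comp]
      refine PullbackCone.IsLimit.mk comm.w
        (fun s => hk.lift (KernelFork.ofι s.snd (hsnd s))) ?_ ?_ ?_
      · intro s
        have hlift : hk.lift (KernelFork.ofι s.snd (hsnd s)) ≫ k = s.snd :=
          Fork.IsLimit.lift_ι hk
        apply pullback.hom_ext
        · simp only [Category.assoc, pullback.lift_fst, comp_zero]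
          have := s.condition =≫ prod.fst; simp at this; rw [prod.lift_fst, prod.lift_fst] at this; exact this.symm
        · simp only [Category.assoc, pullback.lift_snd]
          rw [hlift]
          have := s.condition =≫ prod.snd; simp at this; rw [prod.lift_snd, prod.lift_snd] at this; exact this.symm
      · intro s
        exact Fork.IsLimit.lift_ι hk
      · intro s m hm1 hm2
        apply Fork.IsLimit.hom_ext hk
        have hlift : hk.lift (KernelFork.ofι s.snd (hsnd s)) ≫ k = s.snd :=
          Fork.IsLimit.lift_ι hk
        simpa [hlift] using hm2
  · intro K X k hc
    refine ⟨hc.1, K, X, k, 𝟙 X, 𝟙 K, hc, ⟨RegularEpi.ofIso (Iso.refl _)⟩, ⟨RegularEpi.ofIso (Iso.refl _)⟩, by simp⟩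
end

section
/- In a pointed regular category, every ideal is the regular image of a kernel along a regular epimorphism: for every ideal i : I → Y there exist an object R, a morphism l : M → R which is a kernel of some morphism, a regular epimorphism t : R → Y, and a regular epimorphism q : M → I such that i∘q = t∘l. -/
open CategoryTheory CategoryTheory.Limits

universe v u

variable {C : Type u} [Category.{v} C]

/-- A split epi followed by a regular epi is a regular epi. -/
noncomputable def regularEpiSplitCompAux {C : Type u} [Category.{v} C] [HasPullbacks C]
    {R X Y : C} (c : R ⟶ X) (e : X ⟶ R) (hec : e ≫ c = 𝟙 X)
    (p : X ⟶ Y) (hp : RegularEpi p) : RegularEpi (c ≫ p) := by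
  have hepi : Epi (c ≫ p) := by
    have hc : IsSplitEpi c := ⟨⟨⟨e, hec⟩⟩⟩
    have : Epi p := hp.epi
    exact epi_comp c p
  have hcond : (c ≫ e) ≫ (c ≫ p) = 𝟙 R ≫ (c ≫ p) := by
    rw [Category.assoc, reassoc_of% hec, Category.id_comp]
  have hzcond : (hp.left ≫ e) ≫ (c ≫ p) = (hp.right ≫ e) ≫ (c ≫ p) := by
    simp only [Category.assoc]
    rw [reassoc_of% hec]
    exact hp.w
  refine
    { W := pullback (c ≫ p) (c ≫ p)
      left := pullback.fst (c ≫ p) (c ≫ p)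
      right := pullback.snd (c ≫ p) (c ≫ p)
      w := pullback.condition
      isColimit := Cofork.IsColimit.mk _ ?_ ?_ ?_ }
  · intro s
    have key : hp.left ≫ (e ≫ s.π) = hp.right ≫ (e ≫ s.π) := by
      have := pullback.lift (hp.left ≫ e) (hp.right ≫ e) hzcond ≫= s.condition
      erw [pullback.lift_fst_assoc, pullback.lift_snd_assoc] at this
      simpa using this
    exact Cofork.IsColimit.desc hp.isColimit (e ≫ s.π) key
  · intro s
    have key : hp.left ≫ (e ≫ s.π) = hp.right ≫ (e ≫ s.π) := by
      have := pullback.lift (hp.left ≫ e) (hp.right ≫ e) hzcond ≫= s.condition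
      erw [pullback.lift_fst_assoc, pullback.lift_snd_assoc] at this
      simpa using this
    have hj : (c ≫ e) ≫ s.π = s.π := by
      have := pullback.lift (c ≫ e) (𝟙 R) hcond ≫= s.condition
      erw [pullback.lift_fst_assoc, pullback.lift_snd_assoc] at this
      simpa using this
    have hd : p ≫ Cofork.IsColimit.desc hp.isColimit (e ≫ s.π) key = e ≫ s.π :=
      Cofork.IsColimit.π_desc hp.isColimit
    show (c ≫ p) ≫ Cofork.IsColimit.desc hp.isColimit (e ≫ s.π) key = s.π
    rw [Category.assoc, hd, ← Category.assoc, hj]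
  · intro s m hm
    have key : hp.left ≫ (e ≫ s.π) = hp.right ≫ (e ≫ s.π) := by
      have := pullback.lift (hp.left ≫ e) (hp.right ≫ e) hzcond ≫= s.condition
      erw [pullback.lift_fst_assoc, pullback.lift_snd_assoc] at this
      simpa using this
    have hj : (c ≫ e) ≫ s.π = s.π := by
      have := pullback.lift (c ≫ e) (𝟙 R) hcond ≫= s.condition
      erw [pullback.lift_fst_assoc, pullback.lift_snd_assoc] at this
      simpa using this
    have hd : p ≫ Cofork.IsColimit.desc hp.isColimit (e ≫ s.π) key = e ≫ s.π :=
      Cofork.IsColimit.π_desc hp.isColimit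
    have hm' : (c ≫ p) ≫ m = s.π := hm
    show m = Cofork.IsColimit.desc hp.isColimit (e ≫ s.π) key
    apply (cancel_epi (c ≫ p)).mp
    rw [hm', Category.assoc, hd, ← Category.assoc, hj]

/-- In a pointed regular category, every ideal is the regular image of a kernel along a
regular epimorphism: for every ideal `i : I ⟶ Y` there are an object `R`, a morphism
`l : M ⟶ R` which is a kernel of some morphism, and regular epimorphisms `t : R ⟶ Y` and
`q : M ⟶ I` such that `i ∘ q = t ∘ l`. -/
theorem ideal_is_regular_image_of_kernel {C : Type u} [Category.{v} C]
    [HasZeroObject C] [HasZeroMorphisms C] [RegularCategory C]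
    {I Y : C} (i : I ⟶ Y) (hi : IsIdeal i) :
    ∃ (R M : C) (l : M ⟶ R) (t : R ⟶ Y) (q : M ⟶ I),
      (∃ (Z : C) (f : R ⟶ Z) (w : l ≫ f = 0), Nonempty (IsLimit (KernelFork.ofι l w))) ∧
      Nonempty (RegularEpi t) ∧ Nonempty (RegularEpi q) ∧ q ≫ i = l ≫ t := by
  obtain ⟨imono, K, X, k, p, q, hclot, ⟨hp⟩, ⟨hq⟩, hcomm⟩ := hi
  obtain ⟨kmono, R, d, c, e, mdc, hed, hec, l, hpb⟩ := hclot
  have h1 : l ≫ prod.lift d c = k ≫ prod.lift 0 (𝟙 X) := hpb.w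
  have hld : l ≫ d = 0 := by
    have := h1 =≫ prod.fst
    simp only [Category.assoc] at this
    erw [prod.lift_fst, prod.lift_fst] at this
    simpa using this
  have hlc : l ≫ c = k := by
    have := h1 =≫ prod.snd
    simp only [Category.assoc] at this
    erw [prod.lift_snd, prod.lift_snd] at this
    simpa using this
  refine ⟨R, K, l, c ≫ p, q, ⟨X, d, hld, ⟨?_⟩⟩,
    ⟨regularEpiSplitCompAux c e hec p hp⟩, ⟨hq⟩, ?_⟩
  · refine KernelFork.IsLimit.ofι l hld
      (fun {W'} g hg => hpb.lift g (g ≫ c) ?_) (fun {W'} g hg => hpb.lift_fst _ _ _)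
      (fun {W'} g hg m hm => ?_)
    · apply Limits.prod.hom_ext <;> simp [hg]
    · apply hpb.hom_ext
      · simp only [IsPullback.lift_fst]
        exact hm
      · simp only [IsPullback.lift_snd]
        rw [← hlc, ← Category.assoc, hm]
  · rw [hcomm, ← hlc, Category.assoc]
end

section
/- In a pointed regular category, ideals are stable under pullback: if i : I → Y is an ideal and f : Y' → Y is any morphism, then the pullback i' : I' → Y' of i along f is an ideal. -/
open CategoryTheory CategoryTheory.Limits

universe v u

variable {C : Type u} [Category.{v} C]

/-- In a pointed regular category, ideals are stable under pullback: if `i : I ⟶ Y` is an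
ideal and `f : Y' ⟶ Y` is any morphism, then the pullback `i' : I' ⟶ Y'` of `i` along `f`
is an ideal. -/
theorem isIdeal_of_isPullback {C : Type u} [Category.{v} C]
    [HasZeroObject C] [HasZeroMorphisms C] [RegularCategory C]
    {I Y Y' I' : C} (i : I ⟶ Y) (f : Y' ⟶ Y) (g : I' ⟶ I) (i' : I' ⟶ Y')
    (h : IsPullback g i' i f) (hi : IsIdeal i) :
    IsIdeal i' := by

  obtain ⟨mono_i, K, X, k, p, q, clot_k, ⟨ep⟩, ⟨eq⟩, hsq⟩ := hi
  obtain ⟨mono_k, R, d, c, e, mono_dc, hed, hec, l, hl⟩ := clot_k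
  haveI := mono_i
  haveI := mono_k
  haveI := mono_dc
  -- X' : pullback of p along f
  let X' := pullback p f
  let g₀ : X' ⟶ X := pullback.fst p f
  let p' : X' ⟶ Y' := pullback.snd p f
  have hX' : IsPullback g₀ p' p f := IsPullback.of_hasPullback p f
  -- K' : pullback of k along g₀
  let K' := pullback k g₀
  let πK : K' ⟶ K := pullback.fst k g₀
  let k' : K' ⟶ X' := pullback.snd k g₀
  have hK' : IsPullback πK k' k g₀ := IsPullback.of_hasPullback k g₀
  haveI : Mono k' := inferInstanceAs (Mono (pullback.snd k g₀))
  -- R' : pullback of ⟨d,c⟩ along g₀ × g₀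
  let R' := pullback (prod.lift d c) (prod.map g₀ g₀)
  let rR : R' ⟶ R := pullback.fst _ _
  let m' : R' ⟶ X' ⨯ X' := pullback.snd _ _
  have hR' : IsPullback rR m' (prod.lift d c) (prod.map g₀ g₀) :=
    IsPullback.of_hasPullback _ _
  haveI : Mono m' := inferInstanceAs (Mono (pullback.snd (prod.lift d c) (prod.map g₀ g₀)))
  let d' : R' ⟶ X' := m' ≫ prod.fst
  let c' : R' ⟶ X' := m' ≫ prod.snd
  have hm' : prod.lift d' c' = m' := by
    apply Limits.prod.hom_ext
    · exact prod.lift_fst _ _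
    · exact prod.lift_snd _ _
  -- reflexivity
  let e' : X' ⟶ R' := pullback.lift (g₀ ≫ e) (prod.lift (𝟙 X') (𝟙 X')) (by
    apply Limits.prod.hom_ext <;>
      simp [hed, hec, reassoc_of% hed, reassoc_of% hec])
  have he'd : e' ≫ d' = 𝟙 X' := by
    rw [← Category.assoc, pullback.lift_snd]; exact prod.lift_fst _ _
  have he'c : e' ≫ c' = 𝟙 X' := by
    rw [← Category.assoc, pullback.lift_snd]; exact prod.lift_snd _ _
  -- the key commutation: ⟨0,1⟩ ≫ (g₀ × g₀) = g₀ ≫ ⟨0,1⟩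
  have hzero : prod.lift (0 : X' ⟶ X') (𝟙 X') ≫ prod.map g₀ g₀
      = g₀ ≫ prod.lift (0 : X ⟶ X) (𝟙 X) := by
    apply Limits.prod.hom_ext <;> simp
  -- l' : K' ⟶ R'
  let l' : K' ⟶ R' := pullback.lift (πK ≫ l) (k' ≫ prod.lift (0 : X' ⟶ X') (𝟙 X')) (by
    rw [Category.assoc, Category.assoc, hzero, hl.w, ← Category.assoc, ← Category.assoc,
      hK'.w])
  have hl'fst : l' ≫ rR = πK ≫ l := pullback.lift_fst _ _ _
  have hl'snd : l' ≫ m' = k' ≫ prod.lift (0 : X' ⟶ X') (𝟙 X') := pullback.lift_snd _ _ _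
  -- k' is the zero-class of (d', c')
  have hbig : IsPullback (l' ≫ rR) k' (prod.lift d c)
      (prod.lift (0 : X' ⟶ X') (𝟙 X') ≫ prod.map g₀ g₀) := by
    rw [hl'fst, hzero]
    exact hK'.paste_horiz hl
  have hzc : IsPullback l' k' m' (prod.lift (0 : X' ⟶ X') (𝟙 X')) :=
    IsPullback.of_right hbig hl'snd hR'
  have clot_k' : IsClot k' := by
    refine ⟨inferInstance, R', d', c', e', ?_, he'd, he'c, l', ?_⟩
    · rw [hm']; infer_instance
    · rw [hm']; exact hzc
  -- p' is a regular epi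
  have ep' : Nonempty (RegularEpi p') :=
    RegularCategory.regularEpiStable p f g₀ p' hX' ⟨ep⟩
  -- q' : K' ⟶ I'
  have hw : (πK ≫ q) ≫ i = (k' ≫ p') ≫ f := by
    rw [Category.assoc, hsq, ← Category.assoc, hK'.w, Category.assoc, Category.assoc,
      hX'.w]
  let q' : K' ⟶ I' := h.lift (πK ≫ q) (k' ≫ p') hw
  have hq'g : q' ≫ g = πK ≫ q := h.lift_fst _ _ _
  have hq'i' : q' ≫ i' = k' ≫ p' := h.lift_snd _ _ _
  -- q' is a regular epi, via the pullback square (πK, q', q, g)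
  have hvert : IsPullback πK (k' ≫ p') (k ≫ p) f := hK'.paste_vert hX'
  have hKI : IsPullback πK q' q g := by
    apply IsPullback.of_bot _ hq'g.symm h
    rw [hq'i', hsq]
    exact hvert
  have eq' : Nonempty (RegularEpi q') :=
    RegularCategory.regularEpiStable q g πK q' hKI ⟨eq⟩
  -- i' is mono
  haveI mono_i' : Mono i' := by
    rw [← h.isoPullback_hom_snd]
    exact mono_comp _ _
  exact ⟨mono_i', K', X', k', p', q', clot_k', ep', eq', hq'i'⟩
end

section
/- In a pointed regular category, ideals are stable under composition with product inclusions: if i : I → Y is an ideal and W is any object, then ⟨i,0⟩ : I → Y×W (the composite of i with the product inclusion ⟨1_Y,0⟩ : Y → Y×W) is an ideal. -/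
open CategoryTheory CategoryTheory.Limits

universe v u

variable {C : Type u} [Category.{v} C]

attribute [local simp] prod.lift_fst prod.lift_snd prod.lift_fst_assoc prod.lift_snd_assoc

/-- `X ⨯ W` is the pullback of `p : X ⟶ Y` along `prod.fst : Y ⨯ W ⟶ Y`. -/
theorem isPullback_prod_map_fst [HasBinaryProducts C] {X Y : C} (p : X ⟶ Y) (W : C) :
    IsPullback (prod.fst : X ⨯ W ⟶ X) (prod.map p (𝟙 W)) p (prod.fst : Y ⨯ W ⟶ Y) := by
  refine IsPullback.of_isLimit' ⟨(prod.map_fst p (𝟙 W)).symm⟩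
    (PullbackCone.IsLimit.mk _ (fun s => prod.lift s.fst (s.snd ≫ prod.snd)) ?_ ?_ ?_)
  · intro s; simp
  · intro s
    apply Limits.prod.hom_ext
    · simpa using s.condition
    · simp
  · intro s m h1 h2
    apply Limits.prod.hom_ext
    · simpa using h1
    · have := h2 =≫ prod.snd
      simpa using this

/-- In a pointed regular category, ideals are stable under composition with product
inclusions: if `i : I ⟶ Y` is an ideal and `W` is any object, then
`⟨i,0⟩ : I ⟶ Y ⨯ W`, the composite of `i` with the product inclusion
`⟨1_Y,0⟩ : Y ⟶ Y ⨯ W`, is an ideal. -/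
theorem isIdeal_comp_product_inclusion {C : Type u} [Category.{v} C]
    [HasZeroObject C] [HasZeroMorphisms C] [RegularCategory C]
    {I Y : C} (i : I ⟶ Y) (W : C) (hi : IsIdeal i) :
    i ≫ prod.lift (𝟙 Y) (0 : Y ⟶ W) = prod.lift i (0 : I ⟶ W) ∧
    IsIdeal (i ≫ prod.lift (𝟙 Y) (0 : Y ⟶ W)) := by
  obtain ⟨hmono, K, X, k, p, q, ⟨hkmono, R, d, c, e, hdc, hed, hec, l, hpb⟩, hp, ⟨hq⟩, hcomm⟩ := hi
  have heq : i ≫ prod.lift (𝟙 Y) (0 : Y ⟶ W) = prod.lift i 0 := by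
    apply Limits.prod.hom_ext <;> simp
  -- basic consequences of the original pullback square
  have hld : l ≫ d = 0 := by
    have := hpb.w =≫ prod.fst
    simpa using this
  have hlc : l ≫ c = k := by
    have := hpb.w =≫ prod.snd
    simpa using this
  refine ⟨heq, ?_, K, X ⨯ W, prod.lift k 0, prod.map p (𝟙 W), q, ?_, ?_, ⟨hq⟩, ?_⟩
  -- mono
  · rw [heq]
    exact ⟨fun u v huv => by
      rw [← cancel_mono i]
      have := huv =≫ prod.fst
      simpa using this⟩
  -- the clot on X ⨯ W
  · refine ⟨⟨fun u v huv => by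
      rw [← cancel_mono k]
      have := huv =≫ prod.fst
      simpa using this⟩,
      R ⨯ W, prod.map d (𝟙 W), prod.map c (𝟙 W), prod.map e (𝟙 W), ?_, ?_, ?_,
      prod.lift l 0, ?_⟩
    · -- the relation is mono
      refine ⟨fun u v huv => ?_⟩
      have h1 := huv =≫ prod.fst ≫ prod.fst
      have h2 := huv =≫ prod.fst ≫ prod.snd
      have h3 := huv =≫ prod.snd ≫ prod.fst
      simp only [Category.assoc, prod.lift_fst, prod.lift_snd] at h1 h2 h3
      apply Limits.prod.hom_ext
      · rw [← cancel_mono (prod.lift d c)]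
        apply Limits.prod.hom_ext
        · simpa using h1
        · simpa using h3
      · simpa using h2
    · apply Limits.prod.hom_ext <;> simp [reassoc_of% hed]
      · simp [← Category.assoc, hed]
    · apply Limits.prod.hom_ext <;> simp
      · simp [← Category.assoc, hec]
    · -- the pullback square for the zero-class
      have comm : prod.lift l 0 ≫ prod.lift (prod.map d (𝟙 W)) (prod.map c (𝟙 W)) =
          prod.lift k 0 ≫ prod.lift (0 : X ⨯ W ⟶ X ⨯ W) (𝟙 (X ⨯ W)) := by
        apply Limits.prod.hom_ext
        · simp
          apply Limits.prod.hom_ext <;> simp [reassoc_of% hld, hld]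
        · simp
          apply Limits.prod.hom_ext <;> simp [← Category.assoc, hlc]
      have key : ∀ s : PullbackCone (prod.lift (prod.map d (𝟙 W)) (prod.map c (𝟙 W)))
          (prod.lift (0 : X ⨯ W ⟶ X ⨯ W) (𝟙 (X ⨯ W))),
          (s.fst ≫ prod.fst) ≫ prod.lift d c =
            (s.snd ≫ prod.fst) ≫ prod.lift (0 : X ⟶ X) (𝟙 X) ∧
          s.fst ≫ prod.snd = 0 ∧ s.snd ≫ prod.snd = 0 := by
        intro s
        have h1 : s.fst ≫ prod.map d (𝟙 W) = 0 := by
          have := s.condition =≫ prod.fst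
          simpa using this
        have h2 : s.fst ≫ prod.map c (𝟙 W) = s.snd := by
          have := s.condition =≫ prod.snd
          simpa using this
        have hA : s.fst ≫ prod.fst ≫ d = 0 := by
          have := h1 =≫ prod.fst
          simpa using this
        have hB : s.fst ≫ prod.snd = 0 := by
          have := h1 =≫ prod.snd
          simpa using this
        have hC : s.snd ≫ prod.fst = s.fst ≫ prod.fst ≫ c := by
          have := h2 =≫ prod.fst
          simpa using this.symm
        have hD : s.snd ≫ prod.snd = 0 := by
          have := h2 =≫ prod.snd
          simp only [Category.assoc, prod.map_snd, Category.comp_id] at this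
          rw [← this, hB]
        refine ⟨?_, hB, hD⟩
        apply Limits.prod.hom_ext
        · simpa using hA
        · simpa using hC.symm
      refine IsPullback.of_isLimit' ⟨comm⟩
        (PullbackCone.IsLimit.mk _
          (fun s => hpb.lift (s.fst ≫ prod.fst) (s.snd ≫ prod.fst) (key s).1) ?_ ?_ ?_)
      · intro s
        apply Limits.prod.hom_ext
        · simpa using hpb.lift_fst _ _ (key s).1
        · simpa using (key s).2.1.symm
      · intro s
        apply Limits.prod.hom_ext
        · simpa using hpb.lift_snd _ _ (key s).1
        · simpa using (key s).2.2.symm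
      · intro s m h1 h2
        apply hpb.hom_ext
        · have hm := h1 =≫ prod.fst
          simp only [Category.assoc, prod.lift_fst] at hm
          rw [hm, hpb.lift_fst]
        · have hm := h2 =≫ prod.fst
          simp only [Category.assoc, prod.lift_fst] at hm
          rw [hm, hpb.lift_snd]
  -- prod.map p 1 is a regular epi
  · exact RegularCategory.regularEpiStable p prod.fst prod.fst (prod.map p (𝟙 W))
      (isPullback_prod_map_fst p W) hp
  -- commutativity
  · rw [heq]
    apply Limits.prod.hom_ext <;> simp [hcomm]
end

section
/- In a pointed regular category, an intersection of an ideal and a clot is an ideal: if i : I → Y is an ideal and l : L → Y is a clot, then the subobject I∩L → Y obtained as the pullback of i and l is an ideal. -/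
open CategoryTheory CategoryTheory.Limits

universe v u

variable {C : Type u} [Category.{v} C]

/-- In a pullback square, the projection opposite a monomorphism is a monomorphism. -/
lemma mono_fst_of_isPullback' {P X Y Z : C} {fst : P ⟶ X} {snd : P ⟶ Y}
    {f : X ⟶ Z} {g : Y ⟶ Z} (h : IsPullback fst snd f g) [Mono g] : Mono fst := by
  constructor
  intro W u v huv
  apply h.hom_ext huv
  rw [← cancel_mono g, Category.assoc, Category.assoc, ← h.w,
    ← Category.assoc, ← Category.assoc, huv]

/-- The pullback of a clot along any morphism is a clot. -/
lemma isClot_of_isPullback_s9 [HasZeroMorphisms C] [HasFiniteLimits C]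
    {L Y X M : C} {l : L ⟶ Y} {p : X ⟶ Y} {mL : M ⟶ L} {m : M ⟶ X}
    (hm : IsPullback mL m l p) (hl : IsClot l) : IsClot m := by
  obtain ⟨hlm, R, d, c, e, hdc, hed, hec, zL, hzL⟩ := hl
  have hmono : Mono m := mono_fst_of_isPullback' hm.flip
  refine ⟨hmono, pullback (prod.lift d c) (prod.map p p),
    pullback.snd _ _ ≫ prod.fst, pullback.snd _ _ ≫ prod.snd, ?_, ?_, ?_, ?_, ?_⟩
  · -- reflexivity morphism
    exact pullback.lift (p ≫ e) (prod.lift (𝟙 X) (𝟙 X))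
      (by simp [prod.comp_lift, prod.lift_map, hed, hec])
  · -- mono of the relation
    have key : prod.lift (pullback.snd (prod.lift d c) (prod.map p p) ≫ prod.fst)
        (pullback.snd (prod.lift d c) (prod.map p p) ≫ prod.snd)
        = pullback.snd (prod.lift d c) (prod.map p p) := by
      rw [← prod.comp_lift, prod.lift_fst_snd, Category.comp_id]
    rw [key]
    exact mono_fst_of_isPullback' (IsPullback.of_hasPullback (prod.lift d c) (prod.map p p)).flip
  · exact (pullback.lift_snd_assoc ..).trans (prod.lift_fst _ _)
  · exact (pullback.lift_snd_assoc ..).trans (prod.lift_snd _ _)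
  · -- zero class
    have hR' : IsPullback (pullback.fst (prod.lift d c) (prod.map p p))
        (pullback.snd (prod.lift d c) (prod.map p p)) (prod.lift d c) (prod.map p p) :=
      IsPullback.of_hasPullback _ _
    have eq1 : prod.lift (0 : X ⟶ X) (𝟙 X) ≫ prod.map p p = p ≫ prod.lift (0 : Y ⟶ Y) (𝟙 Y) := by
      simp [prod.lift_map, prod.comp_lift]
    have big : IsPullback (mL ≫ zL) m (prod.lift d c) (p ≫ prod.lift (0 : Y ⟶ Y) (𝟙 Y)) :=
      hm.paste_horiz hzL
    set z : M ⟶ pullback (prod.lift d c) (prod.map p p) :=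
      pullback.lift (mL ≫ zL) (m ≫ prod.lift (0 : X ⟶ X) (𝟙 X))
        (by rw [big.w, ← eq1, ← Category.assoc]) with hz
    have key : prod.lift (pullback.snd (prod.lift d c) (prod.map p p) ≫ prod.fst)
        (pullback.snd (prod.lift d c) (prod.map p p) ≫ prod.snd)
        = pullback.snd (prod.lift d c) (prod.map p p) := by
      rw [← prod.comp_lift, prod.lift_fst_snd, Category.comp_id]
    refine ⟨z, ?_⟩
    rw [key]
    refine IsPullback.of_right ?_ (by exact pullback.lift_snd ..) hR'
    have hzfst : z ≫ pullback.fst (prod.lift d c) (prod.map p p) = mL ≫ zL := by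
      exact pullback.lift_fst ..
    rw [hzfst, eq1]
    exact big

/-- The intersection of two clots is a clot. -/
lemma isClot_inter [HasZeroMorphisms C] [HasFiniteLimits C]
    {K M X N : C} {k : K ⟶ X} {m : M ⟶ X} {nK : N ⟶ K} {nM : N ⟶ M}
    (hp : IsPullback nK nM k m) (hk : IsClot k) (hm : IsClot m) : IsClot (nK ≫ k) := by
  obtain ⟨hkm, R₁, d₁, c₁, e₁, hdc₁, hed₁, hec₁, z₁, hz₁⟩ := hk
  obtain ⟨hmm, R₂, d₂, c₂, e₂, hdc₂, hed₂, hec₂, z₂, hz₂⟩ := hm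
  have hnK : Mono nK := mono_fst_of_isPullback' hp
  have hmono : Mono (nK ≫ k) := mono_comp _ _
  have hS : IsPullback (pullback.fst (prod.lift d₁ c₁) (prod.lift d₂ c₂))
      (pullback.snd (prod.lift d₁ c₁) (prod.lift d₂ c₂)) (prod.lift d₁ c₁) (prod.lift d₂ c₂) :=
    IsPullback.of_hasPullback _ _
  set f₁ := pullback.fst (prod.lift d₁ c₁) (prod.lift d₂ c₂)
  set f₂ := pullback.snd (prod.lift d₁ c₁) (prod.lift d₂ c₂)
  have key : prod.lift (f₁ ≫ d₁) (f₁ ≫ c₁) = f₁ ≫ prod.lift d₁ c₁ := by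
    rw [prod.comp_lift]
  refine ⟨hmono, pullback (prod.lift d₁ c₁) (prod.lift d₂ c₂),
    f₁ ≫ d₁, f₁ ≫ c₁, pullback.lift e₁ e₂
      (by rw [prod.comp_lift, prod.comp_lift, hed₁, hec₁, hed₂, hec₂]), ?_,
      by exact (pullback.lift_fst_assoc ..).trans hed₁, by exact (pullback.lift_fst_assoc ..).trans hec₁, ?_⟩
  · rw [key]
    have : Mono f₁ := mono_fst_of_isPullback' hS
    exact mono_comp _ _
  · -- zero class
    have cond : (nK ≫ z₁) ≫ prod.lift d₁ c₁ = (nM ≫ z₂) ≫ prod.lift d₂ c₂ := by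
      rw [Category.assoc, hz₁.w, Category.assoc, hz₂.w, ← Category.assoc, ← Category.assoc, hp.w]
    set zN : N ⟶ pullback (prod.lift d₁ c₁) (prod.lift d₂ c₂) :=
      pullback.lift (nK ≫ z₁) (nM ≫ z₂) cond with hzN
    have hzNf₁ : zN ≫ f₁ = nK ≫ z₁ := by exact pullback.lift_fst ..
    have hzNf₂ : zN ≫ f₂ = nM ≫ z₂ := by exact pullback.lift_snd ..
    refine ⟨zN, ?_⟩
    rw [key]
    have base : IsPullback (nM ≫ z₂) nK (prod.lift d₂ c₂) (k ≫ prod.lift (0 : X ⟶ X) (𝟙 X)) :=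
      hp.flip.paste_horiz hz₂
    rw [← hzNf₂, ← hz₁.w] at base
    have sq1 : IsPullback zN nK f₁ z₁ := IsPullback.of_right base hzNf₁ hS.flip
    exact sq1.paste_vert hz₁

/-- In a pointed regular category, an intersection of an ideal and a clot is an ideal:
if `i : I ⟶ Y` is an ideal and `l : L ⟶ Y` is a clot, then the subobject `I ∩ L → Y`,
obtained as (the diagonal of) the pullback of `i` and `l`, is an ideal. -/
theorem isIdeal_intersection_clot {C : Type u} [Category.{v} C]
    [HasZeroObject C] [HasZeroMorphisms C] [RegularCategory C]
    {I L Y P : C} (i : I ⟶ Y) (l : L ⟶ Y) (a : P ⟶ I) (b : P ⟶ L)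
    (h : IsPullback a b i l) (hi : IsIdeal i) (hl : IsClot l) :
    IsIdeal (a ≫ i) := by
  obtain ⟨hmono_i, K, X, k, p, q, hk, hp_epi, hq_epi, hcomm⟩ := hi
  -- pull back `l` along `p` : a clot `m` on `X`
  have hM : IsPullback (pullback.fst l p) (pullback.snd l p) l p := IsPullback.of_hasPullback _ _
  set mL := pullback.fst l p
  set m := pullback.snd l p
  have hclot_m : IsClot m := isClot_of_isPullback_s9 hM hl
  -- intersect with `k`
  have hN : IsPullback (pullback.fst k m) (pullback.snd k m) k m := IsPullback.of_hasPullback _ _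
  set nK := pullback.fst k m
  set nM := pullback.snd k m
  have hclot_n : IsClot (nK ≫ k) := isClot_inter hN hk hclot_m
  -- the comparison map to P
  have cond : (nK ≫ q) ≫ i = (nM ≫ mL) ≫ l := by
    rw [Category.assoc, hcomm, Category.assoc, hM.w, ← Category.assoc, ← Category.assoc, hN.w]
  set r : pullback k m ⟶ P := h.lift (nK ≫ q) (nM ≫ mL) cond with hr
  have hra : r ≫ a = nK ≫ q := h.lift_fst _ _ _
  have hrb : r ≫ b = nM ≫ mL := h.lift_snd _ _ _
  -- N is the pullback of q along a
  have big : IsPullback (nM ≫ mL) nK l (k ≫ p) := hN.flip.paste_horiz hM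
  have hpb : IsPullback r nK a q := by
    refine IsPullback.of_right ?_ hra h.flip
    rw [hrb, hcomm]
    exact big
  -- r is a regular epi by pullback stability
  have hr_epi : Nonempty (RegularEpi r) :=
    RegularCategory.regularEpiStable q a nK r hpb.flip hq_epi
  -- monomorphism
  have : Mono l := hl.1
  have hma : Mono a := mono_fst_of_isPullback' h
  have hmono : Mono (a ≫ i) := mono_comp _ _
  refine ⟨hmono, pullback k m, X, nK ≫ k, p, r, hclot_n, hp_epi, hr_epi, ?_⟩
  rw [← Category.assoc, hra, Category.assoc, hcomm, ← Category.assoc]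
end

section
/- In a pointed regular category, an intersection of two ideals is an ideal: if i : I → Y and l : L → Y are ideals, then the subobject I∩L → Y obtained as the pullback of i and l is an ideal. -/
open CategoryTheory CategoryTheory.Limits

universe v u

variable {C : Type u} [Category.{v} C]

attribute [local simp] prod.lift_fst prod.lift_snd prod.lift_fst_assoc prod.lift_snd_assoc

theorem regEpi_desc_of_kernelPair [RegularCategory C] {A B T : C} (f : A ⟶ B) (rf : RegularEpi f)
    (s : A ⟶ T) (hs : pullback.fst f f ≫ s = pullback.snd f f ≫ s) :
    ∃ t : B ⟶ T, f ≫ t = s := by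
  have hw : (rf.left : rf.W ⟶ A) ≫ f = rf.right ≫ f := rf.w
  have h2 : (rf.left : rf.W ⟶ A) ≫ s = rf.right ≫ s := by
    have h1 : pullback.lift _ _ hw ≫ pullback.fst f f = (rf.left : rf.W ⟶ A) :=
      pullback.lift_fst _ _ hw
    have h1' : pullback.lift _ _ hw ≫ pullback.snd f f = (rf.right : rf.W ⟶ A) :=
      pullback.lift_snd _ _ hw
    calc (rf.left : rf.W ⟶ A) ≫ s
        = (pullback.lift _ _ hw ≫ pullback.fst f f) ≫ s := by rw [h1]
      _ = pullback.lift _ _ hw ≫ pullback.snd f f ≫ s := by rw [Category.assoc, hs]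
      _ = (rf.right : rf.W ⟶ A) ≫ s := by rw [← Category.assoc, h1']
  obtain ⟨t, ht⟩ := RegularEpi.desc' rf s h2
  exact ⟨t, ht⟩

theorem regularEpi_comp' [RegularCategory C] {A B D : C} (f : A ⟶ B) (g : B ⟶ D)
    (hf : Nonempty (RegularEpi f)) (hg : Nonempty (RegularEpi g)) :
    Nonempty (RegularEpi (f ≫ g)) := by
  obtain ⟨rf⟩ := hf
  obtain ⟨rg⟩ := hg
  haveI := rf; haveI := rg
  constructor
  refine { W := pullback (f ≫ g) (f ≫ g), left := pullback.fst _ _, right := pullback.snd _ _,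
           w := pullback.condition,
           isColimit := Cofork.IsColimit.ofExistsUnique fun s => ?_ }
  have hcond : pullback.fst (f ≫ g) (f ≫ g) ≫ s.π = pullback.snd (f ≫ g) (f ≫ g) ≫ s.π :=
    s.condition
  -- Step 1: s.π coequalizes the kernel pair of f
  have hff : pullback.fst f f ≫ (f ≫ g) = pullback.snd f f ≫ (f ≫ g) := by
    rw [← Category.assoc, ← Category.assoc, pullback.condition]
  have hstep1 : pullback.fst f f ≫ s.π = pullback.snd f f ≫ s.π := by
    have e1 := pullback.lift_fst _ _ hff
    have e2 := pullback.lift_snd _ _ hff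
    calc pullback.fst f f ≫ s.π
        = (pullback.lift _ _ hff ≫ pullback.fst (f ≫ g) (f ≫ g)) ≫ s.π := by rw [e1]
      _ = pullback.lift _ _ hff ≫ pullback.snd (f ≫ g) (f ≫ g) ≫ s.π := by
            rw [Category.assoc, hcond]
      _ = pullback.snd f f ≫ s.π := by rw [← Category.assoc, e2]
  obtain ⟨t₁, ht₁⟩ := regEpi_desc_of_kernelPair f rf s.π hstep1
  -- Step 2: t₁ coequalizes the kernel pair of g
  have pb1 : IsPullback (pullback.fst f (pullback.fst g g)) (pullback.snd f (pullback.fst g g)) f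
      (pullback.fst g g) := IsPullback.of_hasPullback f (pullback.fst g g)
  obtain ⟨re1⟩ := RegularCategory.regularEpiStable f (pullback.fst g g) _ _ pb1 ⟨rf⟩
  set π₁ := pullback.snd f (pullback.fst g g) with hπ₁
  set u := pullback.fst f (pullback.fst g g) with hu
  have pb2 : IsPullback (pullback.fst f (π₁ ≫ pullback.snd g g))
      (pullback.snd f (π₁ ≫ pullback.snd g g)) f (π₁ ≫ pullback.snd g g) :=
    IsPullback.of_hasPullback _ _
  obtain ⟨re2⟩ := RegularCategory.regularEpiStable f (π₁ ≫ pullback.snd g g) _ _ pb2 ⟨rf⟩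
  haveI := re1; haveI := re2
  set v := pullback.snd f (π₁ ≫ pullback.snd g g) with hv
  set w₂ := pullback.fst f (π₁ ≫ pullback.snd g g) with hw₂
  have epi_e : Epi (v ≫ π₁) := by
    haveI := RegularEpi.epi _ re1; haveI := RegularEpi.epi _ re2; exact epi_comp _ _
  have hw1f : (v ≫ u) ≫ f = (v ≫ π₁) ≫ pullback.fst g g := by
    rw [Category.assoc, Category.assoc, pullback.condition]
  have hw2f : w₂ ≫ f = (v ≫ π₁) ≫ pullback.snd g g := by
    rw [Category.assoc, ← pullback.condition]
  have hww : (v ≫ u) ≫ (f ≫ g) = w₂ ≫ (f ≫ g) := by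
    calc (v ≫ u) ≫ (f ≫ g) = ((v ≫ u) ≫ f) ≫ g := by simp only [Category.assoc]
      _ = ((v ≫ π₁) ≫ pullback.fst g g) ≫ g := by rw [hw1f]
      _ = (v ≫ π₁) ≫ pullback.fst g g ≫ g := by simp only [Category.assoc]
      _ = (v ≫ π₁) ≫ pullback.snd g g ≫ g := by rw [pullback.condition]
      _ = ((v ≫ π₁) ≫ pullback.snd g g) ≫ g := by simp only [Category.assoc]
      _ = (w₂ ≫ f) ≫ g := by rw [hw2f]
      _ = w₂ ≫ (f ≫ g) := by simp only [Category.assoc]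
  have hws : (v ≫ u) ≫ s.π = w₂ ≫ s.π := by
    have e1 := pullback.lift_fst _ _ hww
    have e2 := pullback.lift_snd _ _ hww
    calc (v ≫ u) ≫ s.π
        = (pullback.lift _ _ hww ≫ pullback.fst (f ≫ g) (f ≫ g)) ≫ s.π := by rw [e1]
      _ = pullback.lift _ _ hww ≫ pullback.snd (f ≫ g) (f ≫ g) ≫ s.π := by
            rw [Category.assoc, hcond]
      _ = w₂ ≫ s.π := by rw [← Category.assoc, e2]
  have hgt : pullback.fst g g ≫ t₁ = pullback.snd g g ≫ t₁ := by
    have key : (v ≫ π₁) ≫ pullback.fst g g ≫ t₁ = (v ≫ π₁) ≫ pullback.snd g g ≫ t₁ := by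
      calc (v ≫ π₁) ≫ pullback.fst g g ≫ t₁ = ((v ≫ π₁) ≫ pullback.fst g g) ≫ t₁ := by
            rw [← Category.assoc]
        _ = ((v ≫ u) ≫ f) ≫ t₁ := by rw [hw1f]
        _ = (v ≫ u) ≫ s.π := by rw [Category.assoc, ht₁]
        _ = w₂ ≫ s.π := hws
        _ = (w₂ ≫ f) ≫ t₁ := by rw [Category.assoc, ht₁]
        _ = ((v ≫ π₁) ≫ pullback.snd g g) ≫ t₁ := by rw [hw2f]
        _ = (v ≫ π₁) ≫ pullback.snd g g ≫ t₁ := by simp only [Category.assoc]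
    exact (cancel_epi (v ≫ π₁)).mp key
  obtain ⟨t₂, ht₂⟩ := regEpi_desc_of_kernelPair g rg t₁ hgt
  haveI : Epi (f ≫ g) := by
    haveI := RegularEpi.epi _ rf; haveI := RegularEpi.epi _ rg; exact epi_comp f g
  refine ⟨t₂, ?_, fun {m} hm => ?_⟩
  · show (Cofork.ofπ (f ≫ g) pullback.condition).π ≫ t₂ = s.π
    rw [Cofork.π_ofπ, Category.assoc, ht₂, ht₁]
  · have hm' : (f ≫ g) ≫ m = s.π := hm
    have : (f ≫ g) ≫ t₂ = s.π := by rw [Category.assoc, ht₂, ht₁]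
    exact (cancel_epi (f ≫ g)).mp (hm'.trans this.symm)

set_option maxHeartbeats 1000000 in
theorem clot_lemma [HasZeroMorphisms C] [HasFiniteLimits C]
    {K X K' X' Y R R' : C} (k : K ⟶ X) (k' : K' ⟶ X') (p : X ⟶ Y) (p' : X' ⟶ Y)
    (mono_k : Mono k) (mono_k' : Mono k')
    (d c : R ⟶ X) (e : X ⟶ R) (d' c' : R' ⟶ X') (e' : X' ⟶ R')
    (mono_dc : Mono (prod.lift d c)) (hed : e ≫ d = 𝟙 X) (hec : e ≫ c = 𝟙 X)
    (mono_dc' : Mono (prod.lift d' c')) (hed' : e' ≫ d' = 𝟙 X') (hec' : e' ≫ c' = 𝟙 X')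
    (w : K ⟶ R) (pbk : IsPullback w k (prod.lift d c) (prod.lift (0 : X ⟶ X) (𝟙 X)))
    (w' : K' ⟶ R') (pbk' : IsPullback w' k' (prod.lift d' c') (prod.lift (0 : X' ⟶ X') (𝟙 X')))
    (hmcond : (pullback.fst (k ≫ p) (k' ≫ p') ≫ k) ≫ p
      = (pullback.snd (k ≫ p) (k' ≫ p') ≫ k') ≫ p') :
    IsClot (pullback.lift (pullback.fst (k ≫ p) (k' ≫ p') ≫ k)
      (pullback.snd (k ≫ p) (k' ≫ p') ≫ k') hmcond :
      pullback (k ≫ p) (k' ≫ p') ⟶ pullback p p') := by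
  haveI := mono_dc; haveI := mono_dc'; haveI := mono_k; haveI := mono_k'
  set π : pullback p p' ⟶ X := pullback.fst p p' with hπdef
  set π' : pullback p p' ⟶ X' := pullback.snd p p' with hπ'def
  set mK : pullback (k ≫ p) (k' ≫ p') ⟶ K := pullback.fst (k ≫ p) (k' ≫ p') with hmKdef
  set mK' : pullback (k ≫ p) (k' ≫ p') ⟶ K' := pullback.snd (k ≫ p) (k' ≫ p') with hmK'def
  set m : pullback (k ≫ p) (k' ≫ p') ⟶ pullback p p' :=
    pullback.lift (mK ≫ k) (mK' ≫ k') hmcond with hmdef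
  -- basic equations
  have hZcond : π ≫ p = π' ≫ p' := pullback.condition
  have extZ : ∀ {T : C} (u v : T ⟶ pullback p p'), u ≫ π = v ≫ π → u ≫ π' = v ≫ π' → u = v :=
    fun u v h1 h2 => pullback.hom_ext h1 h2
  have extM : ∀ {T : C} (u v : T ⟶ pullback (k ≫ p) (k' ≫ p')),
      u ≫ mK = v ≫ mK → u ≫ mK' = v ≫ mK' → u = v :=
    fun u v h1 h2 => pullback.hom_ext h1 h2
  have hmπ : m ≫ π = mK ≫ k := pullback.lift_fst _ _ _
  have hmπ' : m ≫ π' = mK' ≫ k' := pullback.lift_snd _ _ _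
  have hwd : w ≫ d = 0 := by
    have := congrArg (fun t => t ≫ prod.fst) pbk.w
    simpa using this
  have hwc : w ≫ c = k := by
    have := congrArg (fun t => t ≫ prod.snd) pbk.w
    simpa using this
  have hwd' : w' ≫ d' = 0 := by
    have := congrArg (fun t => t ≫ prod.fst) pbk'.w
    simpa using this
  have hwc' : w' ≫ c' = k' := by
    have := congrArg (fun t => t ≫ prod.snd) pbk'.w
    simpa using this
  -- the pulled-back relations
  set ρ : pullback (prod.lift d c) (prod.map π π) ⟶ R
    := pullback.fst (prod.lift d c) (prod.map π π) with hρdef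
  set τ : pullback (prod.lift d c) (prod.map π π) ⟶ (pullback p p') ⨯ (pullback p p')
    := pullback.snd (prod.lift d c) (prod.map π π) with hτdef
  set ρ' : pullback (prod.lift d' c') (prod.map π' π') ⟶ R'
    := pullback.fst (prod.lift d' c') (prod.map π' π') with hρ'def
  set τ' : pullback (prod.lift d' c') (prod.map π' π') ⟶ (pullback p p') ⨯ (pullback p p')
    := pullback.snd (prod.lift d' c') (prod.map π' π') with hτ'def
  have hρdc : ρ ≫ prod.lift d c = τ ≫ prod.map π π := pullback.condition
  have hρdc' : ρ' ≫ prod.lift d' c' = τ' ≫ prod.map π' π' := pullback.condition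
  have hρd : ρ ≫ d = τ ≫ prod.fst ≫ π := by
    have := congrArg (fun t => t ≫ prod.fst) hρdc
    simpa using this
  have hρc : ρ ≫ c = τ ≫ prod.snd ≫ π := by
    have := congrArg (fun t => t ≫ prod.snd) hρdc
    simpa using this
  have hρ'd' : ρ' ≫ d' = τ' ≫ prod.fst ≫ π' := by
    have := congrArg (fun t => t ≫ prod.fst) hρdc'
    simpa using this
  have hρ'c' : ρ' ≫ c' = τ' ≫ prod.snd ≫ π' := by
    have := congrArg (fun t => t ≫ prod.snd) hρdc'
    simpa using this
  haveI monoτ : Mono τ := by rw [hτdef]; infer_instance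
  haveI monoτ' : Mono τ' := by rw [hτ'def]; infer_instance
  -- the intersected relation S
  set Sf : pullback τ τ' ⟶ pullback (prod.lift d c) (prod.map π π) := pullback.fst τ τ' with hSfdef
  set Ss : pullback τ τ' ⟶ pullback (prod.lift d' c') (prod.map π' π') := pullback.snd τ τ'
    with hSsdef
  have hScond : Sf ≫ τ = Ss ≫ τ' := pullback.condition
  haveI monoSf : Mono Sf := by rw [hSfdef]; infer_instance
  set σ : pullback τ τ' ⟶ (pullback p p') ⨯ (pullback p p') := Sf ≫ τ with hσdef
  haveI monoσ : Mono σ := by rw [hσdef]; infer_instance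
  have hσ1 : Sf ≫ τ = σ := hσdef.symm
  have hσ2 : Ss ≫ τ' = σ := by rw [hσdef]; exact hScond.symm
  set Dm : pullback τ τ' ⟶ pullback p p' := σ ≫ prod.fst with hDdef
  set Cm : pullback τ τ' ⟶ pullback p p' := σ ≫ prod.snd with hCdef
  have hσfst : σ ≫ prod.fst = Dm := hDdef.symm
  have hσsnd : σ ≫ prod.snd = Cm := hCdef.symm
  have hliftDC : prod.lift Dm Cm = σ := by
    apply Limits.prod.hom_ext <;> simp [hDdef, hCdef]
  -- reflexivity
  have he1 : (π ≫ e) ≫ prod.lift d c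
      = prod.lift (𝟙 (pullback p p')) (𝟙 (pullback p p')) ≫ prod.map π π := by
    apply Limits.prod.hom_ext <;> simp [hed, hec]
  have he1' : (π' ≫ e') ≫ prod.lift d' c'
      = prod.lift (𝟙 (pullback p p')) (𝟙 (pullback p p')) ≫ prod.map π' π' := by
    apply Limits.prod.hom_ext <;> simp [hed', hec']
  set eR : pullback p p' ⟶ pullback (prod.lift d c) (prod.map π π)
    := pullback.lift (π ≫ e) (prod.lift (𝟙 _) (𝟙 _)) he1 with heRdef
  set eR' : pullback p p' ⟶ pullback (prod.lift d' c') (prod.map π' π')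
    := pullback.lift (π' ≫ e') (prod.lift (𝟙 _) (𝟙 _)) he1' with heR'def
  have heRτ : eR ≫ τ = prod.lift (𝟙 _) (𝟙 _) := pullback.lift_snd _ _ _
  have heR'τ' : eR' ≫ τ' = prod.lift (𝟙 _) (𝟙 _) := pullback.lift_snd _ _ _
  have heScond : eR ≫ τ = eR' ≫ τ' := by rw [heRτ, heR'τ']
  set eS : pullback p p' ⟶ pullback τ τ' := pullback.lift eR eR' heScond with heSdef
  have heSf : eS ≫ Sf = eR := pullback.lift_fst _ _ _
  have heSσ : eS ≫ σ = prod.lift (𝟙 _) (𝟙 _) := by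
    rw [hσdef, ← Category.assoc, heSf, heRτ]
  have heSD : eS ≫ Dm = 𝟙 (pullback p p') := by
    rw [hDdef, ← Category.assoc, heSσ]; simp
  have heSC : eS ≫ Cm = 𝟙 (pullback p p') := by
    rw [hCdef, ← Category.assoc, heSσ]; simp
  -- the zero-class inclusion of M into S
  have hl1 : (mK ≫ w) ≫ prod.lift d c
      = prod.lift (0 : pullback (k ≫ p) (k' ≫ p') ⟶ pullback p p') m ≫ prod.map π π := by
    apply Limits.prod.hom_ext <;> simp [hwd, hwc, hmπ]
  have hl1' : (mK' ≫ w') ≫ prod.lift d' c'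
      = prod.lift (0 : pullback (k ≫ p) (k' ≫ p') ⟶ pullback p p') m ≫ prod.map π' π' := by
    apply Limits.prod.hom_ext <;> simp [hwd', hwc', hmπ']
  set lR : pullback (k ≫ p) (k' ≫ p') ⟶ pullback (prod.lift d c) (prod.map π π)
    := pullback.lift (mK ≫ w) (prod.lift 0 m) hl1 with hlRdef
  set lR' : pullback (k ≫ p) (k' ≫ p') ⟶ pullback (prod.lift d' c') (prod.map π' π')
    := pullback.lift (mK' ≫ w') (prod.lift 0 m) hl1' with hlR'def
  have hlRρ : lR ≫ ρ = mK ≫ w := pullback.lift_fst _ _ _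
  have hlRτ : lR ≫ τ = prod.lift 0 m := pullback.lift_snd _ _ _
  have hlR'ρ' : lR' ≫ ρ' = mK' ≫ w' := pullback.lift_fst _ _ _
  have hlR'τ' : lR' ≫ τ' = prod.lift 0 m := pullback.lift_snd _ _ _
  have hlScond : lR ≫ τ = lR' ≫ τ' := by rw [hlRτ, hlR'τ']
  set lM : pullback (k ≫ p) (k' ≫ p') ⟶ pullback τ τ' := pullback.lift lR lR' hlScond
    with hlMdef
  have hlMSf : lM ≫ Sf = lR := pullback.lift_fst _ _ _
  have hlMSs : lM ≫ Ss = lR' := pullback.lift_snd _ _ _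
  have hlMσ : lM ≫ σ = prod.lift 0 m := by rw [hσdef, ← Category.assoc, hlMSf, hlRτ]
  have hcomm : lM ≫ prod.lift Dm Cm
      = m ≫ prod.lift (0 : pullback p p' ⟶ pullback p p') (𝟙 (pullback p p')) := by
    rw [hliftDC, hlMσ]
    apply Limits.prod.hom_ext <;> simp
  -- mono m
  have mono_m : Mono m := by
    constructor
    intro T u v huv
    apply extM u v
    · have h1 : u ≫ (mK ≫ k) = v ≫ (mK ≫ k) := by
        rw [← hmπ, ← Category.assoc, ← Category.assoc, huv]
      rw [← Category.assoc, ← Category.assoc] at h1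
      exact (cancel_mono k).mp h1
    · have h1 : u ≫ (mK' ≫ k') = v ≫ (mK' ≫ k') := by
        rw [← hmπ', ← Category.assoc, ← Category.assoc, huv]
      rw [← Category.assoc, ← Category.assoc] at h1
      exact (cancel_mono k').mp h1
  -- the zero-class pullback square
  have hZcls : IsPullback lM m (prod.lift Dm Cm)
      (prod.lift (0 : pullback p p' ⟶ pullback p p') (𝟙 (pullback p p'))) := by
    apply IsPullback.of_isLimit (c := PullbackCone.mk lM m hcomm)
    apply PullbackCone.isLimitAux'
    intro s
    have hsD : s.fst ≫ Dm = 0 := by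
      have := congrArg (fun t => t ≫ prod.fst) s.condition
      simpa using this
    have hsC : s.fst ≫ Cm = s.snd := by
      have := congrArg (fun t => t ≫ prod.snd) s.condition
      simpa using this
    have hs1 : s.fst ≫ σ = prod.lift 0 s.snd := by
      apply Limits.prod.hom_ext
      · rw [Category.assoc, hσfst, hsD, prod.lift_fst]
      · rw [Category.assoc, hσsnd, hsC, prod.lift_snd]
    have hu : (s.fst ≫ Sf ≫ ρ) ≫ prod.lift d c
        = (s.snd ≫ π) ≫ prod.lift (0 : X ⟶ X) (𝟙 X) := by
      apply Limits.prod.hom_ext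
      · simp [hρd, reassoc_of% hσ1, reassoc_of% hσfst, reassoc_of% hsD]
      · simp [hρc, reassoc_of% hσ1, reassoc_of% hσsnd, reassoc_of% hsC]
    have hu' : (s.fst ≫ Ss ≫ ρ') ≫ prod.lift d' c'
        = (s.snd ≫ π') ≫ prod.lift (0 : X' ⟶ X') (𝟙 X') := by
      apply Limits.prod.hom_ext
      · simp [hρ'd', reassoc_of% hσ2, reassoc_of% hσfst, reassoc_of% hsD]
      · simp [hρ'c', reassoc_of% hσ2, reassoc_of% hσsnd, reassoc_of% hsC]
    have hκk : pbk.lift (s.fst ≫ Sf ≫ ρ) (s.snd ≫ π) hu ≫ k = s.snd ≫ π :=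
      pbk.lift_snd _ _ hu
    have hκ'k' : pbk'.lift (s.fst ≫ Ss ≫ ρ') (s.snd ≫ π') hu' ≫ k' = s.snd ≫ π' :=
      pbk'.lift_snd _ _ hu'
    have hκw : pbk.lift (s.fst ≫ Sf ≫ ρ) (s.snd ≫ π) hu ≫ w = s.fst ≫ Sf ≫ ρ :=
      pbk.lift_fst _ _ hu
    have hκ'w' : pbk'.lift (s.fst ≫ Ss ≫ ρ') (s.snd ≫ π') hu' ≫ w' = s.fst ≫ Ss ≫ ρ' :=
      pbk'.lift_fst _ _ hu'
    have hκκ : pbk.lift (s.fst ≫ Sf ≫ ρ) (s.snd ≫ π) hu ≫ (k ≫ p)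
        = pbk'.lift (s.fst ≫ Ss ≫ ρ') (s.snd ≫ π') hu' ≫ (k' ≫ p') := by
      rw [← Category.assoc, hκk, ← Category.assoc, hκ'k']
      simp only [Category.assoc, hZcond]
    set Lft : s.pt ⟶ pullback (k ≫ p) (k' ≫ p') := pullback.lift _ _ hκκ with hLftdef
    have hLK : Lft ≫ mK = pbk.lift (s.fst ≫ Sf ≫ ρ) (s.snd ≫ π) hu := pullback.lift_fst _ _ _
    have hLK' : Lft ≫ mK' = pbk'.lift (s.fst ≫ Ss ≫ ρ') (s.snd ≫ π') hu' :=
      pullback.lift_snd _ _ _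
    have hfr : Lft ≫ m = s.snd := by
      apply extZ
      · rw [Category.assoc, hmπ, ← Category.assoc, hLK, hκk]
      · rw [Category.assoc, hmπ', ← Category.assoc, hLK', hκ'k']
    have hfl : Lft ≫ lM = s.fst := by
      have hh : (Lft ≫ lM) ≫ σ = s.fst ≫ σ := by
        rw [Category.assoc, hlMσ, hs1]
        apply Limits.prod.hom_ext <;> simp [hfr]
      exact (cancel_mono σ).mp hh
    refine ⟨Lft, hfl, hfr, fun {m₀ : s.pt ⟶ pullback (k ≫ p) (k' ≫ p')} hm₀l hm₀m => ?_⟩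
    simp only [PullbackCone.mk_fst, PullbackCone.mk_snd] at hm₀l hm₀m
    replace hm₀l : m₀ ≫ lM = s.fst := hm₀l
    replace hm₀m : m₀ ≫ m = s.snd := hm₀m
    apply extM m₀ Lft
    · rw [hLK]
      apply pbk.hom_ext
      · calc (m₀ ≫ mK) ≫ w = m₀ ≫ (mK ≫ w) := by simp only [Category.assoc]
          _ = m₀ ≫ (lR ≫ ρ) := by rw [hlRρ]
          _ = m₀ ≫ ((lM ≫ Sf) ≫ ρ) := by rw [hlMSf]
          _ = (m₀ ≫ lM) ≫ (Sf ≫ ρ) := by simp only [Category.assoc]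
          _ = s.fst ≫ (Sf ≫ ρ) := by rw [hm₀l]
          _ = pbk.lift (s.fst ≫ Sf ≫ ρ) (s.snd ≫ π) hu ≫ w := by
                rw [hκw]
      · calc (m₀ ≫ mK) ≫ k = m₀ ≫ (mK ≫ k) := by simp only [Category.assoc]
          _ = m₀ ≫ (m ≫ π) := by rw [hmπ]
          _ = (m₀ ≫ m) ≫ π := by simp only [Category.assoc]
          _ = s.snd ≫ π := by rw [hm₀m]
          _ = pbk.lift (s.fst ≫ Sf ≫ ρ) (s.snd ≫ π) hu ≫ k := by rw [hκk]
    · rw [hLK']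
      apply pbk'.hom_ext
      · calc (m₀ ≫ mK') ≫ w' = m₀ ≫ (mK' ≫ w') := by simp only [Category.assoc]
          _ = m₀ ≫ (lR' ≫ ρ') := by rw [hlR'ρ']
          _ = m₀ ≫ ((lM ≫ Ss) ≫ ρ') := by rw [hlMSs]
          _ = (m₀ ≫ lM) ≫ (Ss ≫ ρ') := by simp only [Category.assoc]
          _ = s.fst ≫ (Ss ≫ ρ') := by rw [hm₀l]
          _ = pbk'.lift (s.fst ≫ Ss ≫ ρ') (s.snd ≫ π') hu' ≫ w' := by
                rw [hκ'w']
      · calc (m₀ ≫ mK') ≫ k' = m₀ ≫ (mK' ≫ k') := by simp only [Category.assoc]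
          _ = m₀ ≫ (m ≫ π') := by rw [hmπ']
          _ = (m₀ ≫ m) ≫ π' := by simp only [Category.assoc]
          _ = s.snd ≫ π' := by rw [hm₀m]
          _ = pbk'.lift (s.fst ≫ Ss ≫ ρ') (s.snd ≫ π') hu' ≫ k' := by rw [hκ'k']
  exact ⟨mono_m, pullback τ τ', Dm, Cm, eS, by rw [hliftDC]; exact monoσ, heSD, heSC,
    ⟨lM, hZcls⟩⟩

/-- In a pointed regular category, an intersection of two ideals is an ideal:
if `i : I ⟶ Y` and `l : L ⟶ Y` are ideals, then the subobject `I ∩ L → Y`,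
obtained as (the diagonal of) the pullback of `i` and `l`, is an ideal. -/
theorem isIdeal_intersection {C : Type u} [Category.{v} C]
    [HasZeroObject C] [HasZeroMorphisms C] [RegularCategory C]
    {I L Y P : C} (i : I ⟶ Y) (l : L ⟶ Y) (a : P ⟶ I) (b : P ⟶ L)
    (h : IsPullback a b i l) (hi : IsIdeal i) (hl : IsIdeal l) :
    IsIdeal (a ≫ i) := by
  obtain ⟨mono_i, K, X, k, p, q, hclotk, hp, hq, comm_i⟩ := hi
  obtain ⟨mono_l, K', X', k', p', q', hclotk', hp', hq', comm_l⟩ := hl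
  obtain ⟨mono_k, R, d, c, e, mono_dc, hed, hec, w, pbk⟩ := hclotk
  obtain ⟨mono_k', R', d', c', e', mono_dc', hed', hec', w', pbk'⟩ := hclotk'
  haveI := mono_i; haveI := mono_l; haveI := mono_k; haveI := mono_k'
  -- `a ≫ i` is a monomorphism
  have mono_a : Mono a := by
    constructor
    intro T u v huv
    apply h.hom_ext huv
    have h1 : u ≫ (b ≫ l) = v ≫ (b ≫ l) := by
      rw [← h.w, ← Category.assoc, ← Category.assoc, huv]
    rw [← Category.assoc, ← Category.assoc] at h1
    exact (cancel_mono l).mp h1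
  haveI := mono_a
  have mono_ai : Mono (a ≫ i) := mono_comp _ _
  -- the clot `m : M ⟶ Z`
  have hmcond : (pullback.fst (k ≫ p) (k' ≫ p') ≫ k) ≫ p
      = (pullback.snd (k ≫ p) (k' ≫ p') ≫ k') ≫ p' := by
    simp only [Category.assoc]; exact pullback.condition
  have hclotm : IsClot (pullback.lift (pullback.fst (k ≫ p) (k' ≫ p') ≫ k)
      (pullback.snd (k ≫ p) (k' ≫ p') ≫ k') hmcond) :=
    clot_lemma k k' p p' mono_k mono_k' d c e d' c' e' mono_dc hed hec mono_dc' hed' hec'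
      w pbk w' pbk' hmcond
  set mK : pullback (k ≫ p) (k' ≫ p') ⟶ K := pullback.fst (k ≫ p) (k' ≫ p') with hmKdef
  set mK' : pullback (k ≫ p) (k' ≫ p') ⟶ K' := pullback.snd (k ≫ p) (k' ≫ p') with hmK'def
  set m : pullback (k ≫ p) (k' ≫ p') ⟶ pullback p p' :=
    pullback.lift (mK ≫ k) (mK' ≫ k') hmcond with hmdef
  set π : pullback p p' ⟶ X := pullback.fst p p' with hπdef
  set π' : pullback p p' ⟶ X' := pullback.snd p p' with hπ'def
  have hZcond : π ≫ p = π' ≫ p' := pullback.condition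
  have hMcond : mK ≫ (k ≫ p) = mK' ≫ (k' ≫ p') := pullback.condition
  have extM : ∀ {T : C} (u v : T ⟶ pullback (k ≫ p) (k' ≫ p')),
      u ≫ mK = v ≫ mK → u ≫ mK' = v ≫ mK' → u = v :=
    fun u v h1 h2 => pullback.hom_ext h1 h2
  have hmπ : m ≫ π = mK ≫ k := pullback.lift_fst _ _ _
  have hmπ' : m ≫ π' = mK' ≫ k' := pullback.lift_snd _ _ _
  -- the regular epi `Z ⟶ Y`
  have pbZ : IsPullback π π' p p' := IsPullback.of_hasPullback p p'
  have hπre : Nonempty (RegularEpi π) := RegularCategory.regularEpiStable p' p π' π pbZ.flip hp'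
  have hrre : Nonempty (RegularEpi (π ≫ p)) := regularEpi_comp' π p hπre hp
  -- the intermediate object N = K ×_Y L
  set nK : pullback (k ≫ p) l ⟶ K := pullback.fst (k ≫ p) l with hnKdef
  set nL : pullback (k ≫ p) l ⟶ L := pullback.snd (k ≫ p) l with hnLdef
  have hNcond : nK ≫ (k ≫ p) = nL ≫ l := pullback.condition
  have extN : ∀ {T : C} (u v : T ⟶ pullback (k ≫ p) l),
      u ≫ nK = v ≫ nK → u ≫ nL = v ≫ nL → u = v :=
    fun u v h1 h2 => pullback.hom_ext h1 h2
  -- first leg `t₁ : M ⟶ N`, a pullback of q'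
  have ht1cond : mK ≫ (k ≫ p) = (mK' ≫ q') ≫ l := by
    rw [hMcond, Category.assoc, comm_l]
  set t₁ : pullback (k ≫ p) (k' ≫ p') ⟶ pullback (k ≫ p) l :=
    pullback.lift mK (mK' ≫ q') ht1cond with ht₁def
  have ht₁nK : t₁ ≫ nK = mK := pullback.lift_fst _ _ _
  have ht₁nL : t₁ ≫ nL = mK' ≫ q' := pullback.lift_snd _ _ _
  have pbt₁ : IsPullback mK' t₁ q' nL := by
    apply IsPullback.of_isLimit (c := PullbackCone.mk mK' t₁ ht₁nL.symm)
    apply PullbackCone.isLimitAux'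
    intro s
    have hc : (s.snd ≫ nK) ≫ (k ≫ p) = s.fst ≫ (k' ≫ p') := by
      calc (s.snd ≫ nK) ≫ (k ≫ p) = s.snd ≫ (nK ≫ (k ≫ p)) := by simp only [Category.assoc]
        _ = s.snd ≫ (nL ≫ l) := by rw [hNcond]
        _ = (s.snd ≫ nL) ≫ l := by simp only [Category.assoc]
        _ = (s.fst ≫ q') ≫ l := by rw [s.condition]
        _ = s.fst ≫ (k' ≫ p') := by rw [Category.assoc, comm_l]
    have hLmK : pullback.lift (s.snd ≫ nK) s.fst hc ≫ mK = s.snd ≫ nK := pullback.lift_fst _ _ _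
    have hLmK' : pullback.lift (s.snd ≫ nK) s.fst hc ≫ mK' = s.fst := pullback.lift_snd _ _ _
    refine ⟨pullback.lift (s.snd ≫ nK) s.fst hc, hLmK', ?_,
      fun {m₀ : s.pt ⟶ pullback (k ≫ p) (k' ≫ p')} hm₀f hm₀s => ?_⟩
    · apply extN
      · calc (pullback.lift (s.snd ≫ nK) s.fst hc ≫ t₁) ≫ nK
            = pullback.lift (s.snd ≫ nK) s.fst hc ≫ (t₁ ≫ nK) := by simp only [Category.assoc]
          _ = s.snd ≫ nK := by rw [ht₁nK, hLmK]
      · calc (pullback.lift (s.snd ≫ nK) s.fst hc ≫ t₁) ≫ nL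
            = pullback.lift (s.snd ≫ nK) s.fst hc ≫ (t₁ ≫ nL) := by simp only [Category.assoc]
          _ = (pullback.lift (s.snd ≫ nK) s.fst hc ≫ mK') ≫ q' := by
                rw [ht₁nL]; simp only [Category.assoc]
          _ = s.fst ≫ q' := by rw [hLmK']
          _ = s.snd ≫ nL := s.condition
    · simp only [PullbackCone.mk_fst, PullbackCone.mk_snd] at hm₀f hm₀s
      replace hm₀f : m₀ ≫ mK' = s.fst := hm₀f
      replace hm₀s : m₀ ≫ t₁ = s.snd := hm₀s
      apply extM
      · calc m₀ ≫ mK = m₀ ≫ (t₁ ≫ nK) := by rw [ht₁nK]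
          _ = (m₀ ≫ t₁) ≫ nK := by simp only [Category.assoc]
          _ = s.snd ≫ nK := by rw [hm₀s]
          _ = pullback.lift (s.snd ≫ nK) s.fst hc ≫ mK := hLmK.symm
      · rw [hm₀f, hLmK']
  have ht₁re : Nonempty (RegularEpi t₁) :=
    RegularCategory.regularEpiStable q' nL mK' t₁ pbt₁ hq'
  -- second leg `t₂ : N ⟶ P`, a pullback of q
  have ht2cond : (nK ≫ q) ≫ i = nL ≫ l := by
    rw [Category.assoc, comm_i, ← Category.assoc] at *
    exact hNcond
  set t₂ : pullback (k ≫ p) l ⟶ P := h.lift (nK ≫ q) nL ht2cond with ht₂def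
  have ht₂a : t₂ ≫ a = nK ≫ q := h.lift_fst _ _ _
  have ht₂b : t₂ ≫ b = nL := h.lift_snd _ _ _
  have pbt₂ : IsPullback nK t₂ q a := by
    apply IsPullback.of_isLimit (c := PullbackCone.mk nK t₂ ht₂a.symm)
    apply PullbackCone.isLimitAux'
    intro s
    have hc : s.fst ≫ (k ≫ p) = (s.snd ≫ b) ≫ l := by
      calc s.fst ≫ (k ≫ p) = s.fst ≫ (q ≫ i) := by rw [comm_i]
        _ = (s.fst ≫ q) ≫ i := by simp only [Category.assoc]
        _ = (s.snd ≫ a) ≫ i := by rw [s.condition]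
        _ = s.snd ≫ (a ≫ i) := by simp only [Category.assoc]
        _ = s.snd ≫ (b ≫ l) := by rw [h.w]
        _ = (s.snd ≫ b) ≫ l := by simp only [Category.assoc]
    have hLnK : pullback.lift s.fst (s.snd ≫ b) hc ≫ nK = s.fst := pullback.lift_fst _ _ _
    have hLnL : pullback.lift s.fst (s.snd ≫ b) hc ≫ nL = s.snd ≫ b := pullback.lift_snd _ _ _
    refine ⟨pullback.lift s.fst (s.snd ≫ b) hc, hLnK, ?_,
      fun {m₀ : s.pt ⟶ pullback (k ≫ p) l} hm₀f hm₀s => ?_⟩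
    · apply h.hom_ext
      · calc (pullback.lift s.fst (s.snd ≫ b) hc ≫ t₂) ≫ a
            = pullback.lift s.fst (s.snd ≫ b) hc ≫ (t₂ ≫ a) := by simp only [Category.assoc]
          _ = (pullback.lift s.fst (s.snd ≫ b) hc ≫ nK) ≫ q := by
                rw [ht₂a]; simp only [Category.assoc]
          _ = s.fst ≫ q := by rw [hLnK]
          _ = s.snd ≫ a := s.condition
      · calc (pullback.lift s.fst (s.snd ≫ b) hc ≫ t₂) ≫ b
            = pullback.lift s.fst (s.snd ≫ b) hc ≫ (t₂ ≫ b) := by simp only [Category.assoc]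
          _ = s.snd ≫ b := by rw [ht₂b, hLnL]
    · simp only [PullbackCone.mk_fst, PullbackCone.mk_snd] at hm₀f hm₀s
      replace hm₀f : m₀ ≫ nK = s.fst := hm₀f
      replace hm₀s : m₀ ≫ t₂ = s.snd := hm₀s
      apply extN
      · rw [hm₀f, hLnK]
      · calc m₀ ≫ nL = m₀ ≫ (t₂ ≫ b) := by rw [ht₂b]
          _ = (m₀ ≫ t₂) ≫ b := by simp only [Category.assoc]
          _ = s.snd ≫ b := by rw [hm₀s]
          _ = pullback.lift s.fst (s.snd ≫ b) hc ≫ nL := hLnL.symm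
  have ht₂re : Nonempty (RegularEpi t₂) :=
    RegularCategory.regularEpiStable q a nK t₂ pbt₂ hq
  have htre : Nonempty (RegularEpi (t₁ ≫ t₂)) := regularEpi_comp' t₁ t₂ ht₁re ht₂re
  -- the commuting square
  have hfinal : (t₁ ≫ t₂) ≫ (a ≫ i) = m ≫ (π ≫ p) := by
    calc (t₁ ≫ t₂) ≫ (a ≫ i) = t₁ ≫ ((t₂ ≫ a) ≫ i) := by simp only [Category.assoc]
      _ = t₁ ≫ ((nK ≫ q) ≫ i) := by rw [ht₂a]
      _ = t₁ ≫ (nK ≫ (q ≫ i)) := by simp only [Category.assoc]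
      _ = t₁ ≫ (nK ≫ (k ≫ p)) := by rw [comm_i]
      _ = (t₁ ≫ nK) ≫ (k ≫ p) := by simp only [Category.assoc]
      _ = mK ≫ (k ≫ p) := by rw [ht₁nK]
      _ = (mK ≫ k) ≫ p := by simp only [Category.assoc]
      _ = (m ≫ π) ≫ p := by rw [hmπ]
      _ = m ≫ (π ≫ p) := by simp only [Category.assoc]
  exact ⟨mono_ai, pullback (k ≫ p) (k' ≫ p'), pullback p p', m, π ≫ p, t₁ ≫ t₂,
    hclotm, hrre, htre, hfinal⟩
end

section
/- In a pointed regular category, let (d : R → X, c : R → Y) be a surjective relation with zero-class i : I → Y, and let (d' : T → R, c' : T → R) be the relation on R obtained by pulling back ⟨d,c⟩ : R → X×Y along d×c : R×R → X×Y. Then (d',c') is a reflexive relation on R (there exists e' : R → T with d'∘e' = 1_R = c'∘e', induced by the diagonal ⟨1_R,1_R⟩ : R → R×R), and i is the regular image along c of the zero-class k : K → R of (d',c'): there is a regular epimorphism q : K → I with i∘q = c∘k. -/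
open CategoryTheory CategoryTheory.Limits

universe v u

variable {C : Type u} [Category.{v} C]

/-- In a pointed regular category, let `(d : R ⟶ X, c : R ⟶ Y)` be a surjective relation
with zero-class `i : I ⟶ Y`, and let `(d', c') = (pT ≫ fst, pT ≫ snd)` be the relation on
`R` obtained by pulling back `⟨d,c⟩ : R ⟶ X ⨯ Y` along `d × c : R ⨯ R ⟶ X ⨯ Y`.  Then
`(d', c')` is a reflexive relation on `R` (reflexivity `e'` being induced by the diagonal
`⟨1_R,1_R⟩`), and `i` is the regular image along `c` of the zero-class `k : K ⟶ R` of
`(d', c')`: there is a regular epimorphism `q : K ⟶ I` with `i ∘ q = c ∘ k`. -/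
theorem zeroClass_surjective_relation_is_image_of_clot {C : Type u} [Category.{v} C]
    [HasZeroObject C] [HasZeroMorphisms C] [RegularCategory C]
    {R X Y I T K : C} (d : R ⟶ X) (c : R ⟶ Y)
    (hrel : Mono (prod.lift d c)) (hc : RegularEpi c)
    (l : I ⟶ R) (i : I ⟶ Y)
    (hi : IsPullback l i (prod.lift d c) (prod.lift (0 : Y ⟶ X) (𝟙 Y)))
    (t : T ⟶ R) (pT : T ⟶ R ⨯ R)
    (hT : IsPullback t pT (prod.lift d c) (prod.map d c))
    (m : K ⟶ T) (k : K ⟶ R)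
    (hk : IsPullback m k (prod.lift (pT ≫ prod.fst) (pT ≫ prod.snd))
      (prod.lift (0 : R ⟶ R) (𝟙 R))) :
    Mono (prod.lift (pT ≫ prod.fst) (pT ≫ prod.snd)) ∧
    (∃ e' : R ⟶ T, e' ≫ pT = prod.lift (𝟙 R) (𝟙 R) ∧
      e' ≫ pT ≫ prod.fst = 𝟙 R ∧ e' ≫ pT ≫ prod.snd = 𝟙 R) ∧
    ∃ q : K ⟶ I, Nonempty (RegularEpi q) ∧ q ≫ i = k ≫ c := by
  have hpT_eq : prod.lift (pT ≫ prod.fst) (pT ≫ prod.snd) = pT := by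
    apply Limits.prod.hom_ext <;> simp [prod.lift_fst, prod.lift_snd]
  rw [hpT_eq] at hk ⊢
  -- pT is mono (pullback of the mono ⟨d,c⟩)
  have monoPT : Mono pT := by
    constructor
    intro Z a b hab
    have ht : a ≫ t = b ≫ t := by
      rw [← cancel_mono (prod.lift d c), Category.assoc, Category.assoc, hT.w,
        ← Category.assoc, ← Category.assoc, hab]
    exact hT.hom_ext ht (by rw [hab])
  refine ⟨monoPT, ?_, ?_⟩
  · -- reflexivity
    have hcomm : 𝟙 R ≫ prod.lift d c = prod.lift (𝟙 R) (𝟙 R) ≫ prod.map d c := by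
      apply Limits.prod.hom_ext <;> simp
    refine ⟨hT.lift (𝟙 R) (prod.lift (𝟙 R) (𝟙 R)) hcomm, hT.lift_snd _ _ _, ?_, ?_⟩
    · rw [← Category.assoc, hT.lift_snd]; simp [prod.lift_fst, prod.lift_snd]
    · rw [← Category.assoc, hT.lift_snd]; simp [prod.lift_fst, prod.lift_snd]
  · -- component equations from the pullback squares
    have hl_d : l ≫ d = 0 := by have h := hi.w =≫ prod.fst; simpa [prod.lift_fst, prod.lift_snd] using h
    have hl_c : l ≫ c = i := by have h := hi.w =≫ prod.snd; simpa [prod.lift_fst, prod.lift_snd] using h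
    have hm_d' : m ≫ pT ≫ prod.fst = 0 := by
      have h := hk.w =≫ prod.fst; simpa [prod.lift_fst, prod.lift_snd] using h
    have hm_c' : m ≫ pT ≫ prod.snd = k := by
      have h := hk.w =≫ prod.snd; simpa [prod.lift_fst, prod.lift_snd] using h
    have ht_d : t ≫ d = pT ≫ prod.fst ≫ d := by
      have h := hT.w =≫ prod.fst; simpa [prod.lift_fst, prod.lift_snd] using h
    have ht_c : t ≫ c = pT ≫ prod.snd ≫ c := by
      have h := hT.w =≫ prod.snd; simpa [prod.lift_fst, prod.lift_snd] using h
    have hmt_d : (m ≫ t) ≫ d = 0 :=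
      calc (m ≫ t) ≫ d = m ≫ t ≫ d := by rw [Category.assoc]
        _ = (m ≫ pT ≫ prod.fst) ≫ d := by
              rw [ht_d]; simp only [Category.assoc]
        _ = 0 := by rw [hm_d', zero_comp]
    have hmt_c : (m ≫ t) ≫ c = k ≫ c :=
      calc (m ≫ t) ≫ c = m ≫ t ≫ c := by rw [Category.assoc]
        _ = (m ≫ pT ≫ prod.snd) ≫ c := by
              rw [ht_c]; simp only [Category.assoc]
        _ = k ≫ c := by rw [hm_c']
    have hqcomm : (m ≫ t) ≫ prod.lift d c = (k ≫ c) ≫ prod.lift (0 : Y ⟶ X) (𝟙 Y) := by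
      apply Limits.prod.hom_ext
      · simp only [Category.assoc, prod.lift_fst, comp_zero]
        rw [← Category.assoc, hmt_d]
      · simp only [Category.assoc, prod.lift_snd, Category.comp_id]
        rw [← Category.assoc, hmt_c]
    refine ⟨hi.lift (m ≫ t) (k ≫ c) hqcomm, ?_, hi.lift_snd _ _ _⟩
    set q := hi.lift (m ≫ t) (k ≫ c) hqcomm with hqdef
    have hql : q ≫ l = m ≫ t := hi.lift_fst _ _ _
    have hqi : q ≫ i = k ≫ c := hi.lift_snd _ _ _
    -- i is mono
    have monoi : Mono i := by
      constructor
      intro Z a b hab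
      have hal : a ≫ l = b ≫ l := by
        rw [← cancel_mono (prod.lift d c)]
        apply Limits.prod.hom_ext
        · simp only [Category.assoc, prod.lift_fst, hl_d, comp_zero]
        · simp only [Category.assoc, prod.lift_snd, hl_c, hab]
      exact hi.hom_ext hal hab
    -- the square (k, q, c, i) is a pullback
    have hcomm2 : k ≫ c = q ≫ i := hqi.symm
    have hpb : IsPullback k q c i := by
      refine IsPullback.of_isLimit (PullbackCone.IsLimit.mk hcomm2
        (fun s => ?_) (fun s => ?_) (fun s => ?_) (fun s w hw1 hw2 => ?_))
      · -- lift
        refine hk.lift (hT.lift (s.snd ≫ l) (prod.lift 0 s.fst) ?_) s.fst ?_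
        · apply Limits.prod.hom_ext
          · simp [hl_d, prod.lift_fst, prod.lift_snd]
          · simp [hl_c, s.condition, prod.lift_fst, prod.lift_snd]
        · rw [hT.lift_snd]
          apply Limits.prod.hom_ext <;> simp
      · exact hk.lift_snd _ _ _
      · rw [← cancel_mono i, Category.assoc, hqi, ← Category.assoc, hk.lift_snd,
          s.condition]
      · apply hk.hom_ext
        swap
        · rw [hk.lift_snd, hw1]
        rw [hk.lift_fst]
        apply hT.hom_ext
        · rw [hT.lift_fst, ← hw2]
          simp only [Category.assoc, hql]
        · rw [hT.lift_snd]
          have h1 : w ≫ m ≫ pT = (w ≫ k) ≫ prod.lift (0 : R ⟶ R) (𝟙 R) := by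
            rw [hk.w]; simp only [Category.assoc]
          rw [Category.assoc, h1, hw1]
          apply Limits.prod.hom_ext <;> simp
    exact RegularCategory.regularEpiStable c i k q hpb ⟨hc⟩
end

section
/- In a pointed exact Mal'tsev category, ideals and kernels coincide: a monomorphism i : I → Y is an ideal if and only if it is a kernel of some morphism. -/
open CategoryTheory CategoryTheory.Limits

universe v u

variable {C : Type u} [Category.{v} C]

/-- `(d, c)` is an internal reflexive relation on `X`. -/
def IsReflexiveRelation [HasBinaryProducts C] {R X : C} (d c : R ⟶ X) : Prop :=
  Mono (prod.lift d c) ∧ ∃ e : X ⟶ R, e ≫ d = 𝟙 X ∧ e ≫ c = 𝟙 X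

/-- `(d, c)` is an internal equivalence relation on `X`: a reflexive relation which is
moreover symmetric and transitive in the internal sense. -/
def IsEquivalenceRelation [HasBinaryProducts C] [HasPullbacks C] {R X : C}
    (d c : R ⟶ X) : Prop :=
  IsReflexiveRelation d c ∧
  (∃ σ : R ⟶ R, σ ≫ d = c ∧ σ ≫ c = d) ∧
  (∃ τ : pullback c d ⟶ R,
    τ ≫ d = pullback.fst c d ≫ d ∧ τ ≫ c = pullback.snd c d ≫ c)

attribute [local simp] prod.lift_fst prod.lift_snd prod.lift_fst_assoc prod.lift_snd_assoc pullback.lift_fst pullback.lift_snd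
  pullback.lift_fst_assoc pullback.lift_snd_assoc

section Auxiliary

/-- A morphism into the codomain of a mono that factors through the mono after composing
with a regular epi descends along that regular epi. -/
lemma descend_regularEpi {T' T I Y : C} (t : T' ⟶ T) (ht : RegularEpi t)
    (i : I ⟶ Y) (hi : Mono i) (v : T' ⟶ I) (a : T ⟶ Y) (h : v ≫ i = t ≫ a) :
    ∃ u : T ⟶ I, u ≫ i = a := by
  haveI := RegularEpi.epi t ht
  have hco : (ht.left : ht.W ⟶ T') ≫ v = ht.right ≫ v := by
    rw [← cancel_mono i]
    simp only [Category.assoc, h, RegularEpi.w_assoc]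
  obtain ⟨u, hu⟩ := RegularEpi.desc' ht v hco
  refine ⟨u, ?_⟩
  rw [← cancel_epi t, ← Category.assoc, hu, h]

/-- Regular epi - mono factorization in a regular category. -/
lemma exists_image [RegularCategory C] {A B : C} (g : A ⟶ B) :
    ∃ (S : C) (e : A ⟶ S) (m : S ⟶ B),
      Nonempty (RegularEpi e) ∧ Mono m ∧ e ≫ m = g := by
  haveI := RegularCategory.hasCoequalizerOfKernelPair g
  set g1 := pullback.fst g g with hg1
  set g2 := pullback.snd g g with hg2
  set e := coequalizer.π g1 g2 with he
  set m := coequalizer.desc g pullback.condition with hmdef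
  have hem : e ≫ m = g := coequalizer.π_desc _ _
  have key : ∀ {T : C} (x y : T ⟶ A), x ≫ g = y ≫ g → x ≫ e = y ≫ e := by
    intro T x y hxy
    have h1 : pullback.lift x y hxy ≫ g1 = x := pullback.lift_fst _ _ _
    have h2 : pullback.lift x y hxy ≫ g2 = y := pullback.lift_snd _ _ _
    calc x ≫ e = pullback.lift x y hxy ≫ g1 ≫ e := by rw [← Category.assoc, h1]
    _ = pullback.lift x y hxy ≫ g2 ≫ e := by rw [coequalizer.condition]
    _ = y ≫ e := by rw [← Category.assoc, h2]
  have hmono : Mono m := by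
    constructor
    intro T u v huv
    set π1 := pullback.fst m m with hπ1
    set π2 := pullback.snd m m with hπ2
    obtain ⟨re1⟩ := RegularCategory.regularEpiStable e π1
      (pullback.fst e π1) (pullback.snd e π1) (IsPullback.of_hasPullback e π1)
      ⟨coequalizerRegular _ _⟩
    set s1 := pullback.snd e π1 with hs1
    obtain ⟨re2⟩ := RegularCategory.regularEpiStable e (s1 ≫ π2)
      (pullback.fst e (s1 ≫ π2)) (pullback.snd e (s1 ≫ π2))
      (IsPullback.of_hasPullback e (s1 ≫ π2)) ⟨coequalizerRegular _ _⟩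
    set t1 := pullback.snd e (s1 ≫ π2) with ht1
    set a := t1 ≫ pullback.fst e π1 with ha
    set b := pullback.fst e (s1 ≫ π2) with hb
    have hae : a ≫ e = (t1 ≫ s1) ≫ π1 := by
      rw [ha, Category.assoc, pullback.condition, ← Category.assoc, ← hs1]
    have hbe : b ≫ e = (t1 ≫ s1) ≫ π2 := by
      rw [hb, pullback.condition, ← ht1, Category.assoc]
    have hg : a ≫ g = b ≫ g := by
      calc a ≫ g = a ≫ e ≫ m := by rw [hem]
      _ = (t1 ≫ s1) ≫ π1 ≫ m := by rw [← Category.assoc, hae, Category.assoc]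
      _ = (t1 ≫ s1) ≫ π2 ≫ m := by rw [pullback.condition]
      _ = b ≫ e ≫ m := by rw [← Category.assoc, ← hbe, Category.assoc]
      _ = b ≫ g := by rw [hem]
    have hπ : π1 = π2 := by
      haveI := RegularEpi.epi _ re1; haveI := RegularEpi.epi _ re2
      have h2 : (t1 ≫ s1) ≫ π1 = (t1 ≫ s1) ≫ π2 := by
        rw [← hae, ← hbe]; exact key a b hg
      exact (cancel_epi (t1 ≫ s1)).1 h2
    calc u = pullback.lift u v huv ≫ π1 := (pullback.lift_fst _ _ _).symm
    _ = pullback.lift u v huv ≫ π2 := by rw [hπ]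
    _ = v := pullback.lift_snd _ _ _
  exact ⟨coequalizer g1 g2, e, m, ⟨coequalizerRegular _ _⟩, hmono, hem⟩

/-- In a Mal'tsev category every internal relation is difunctional. -/
lemma maltsev_difunctional [HasFiniteLimits C]
    (maltsev : ∀ {R X : C} (d c : R ⟶ X), IsReflexiveRelation d c →
      _root_.IsEquivalenceRelation d c)
    {M A B : C} (r1 : M ⟶ A) (r2 : M ⟶ B) (hr : Mono (prod.lift r1 r2))
    {T : C} (m1 m2 m3 : T ⟶ M) (h12 : m1 ≫ r2 = m2 ≫ r2) (h23 : m2 ≫ r1 = m3 ≫ r1) :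
    ∃ m4 : T ⟶ M, m4 ≫ r1 = m1 ≫ r1 ∧ m4 ≫ r2 = m3 ≫ r2 := by
  set r := prod.lift r1 r2 with hrdef
  -- the map (m, m') ↦ (r1 m, r2 m')
  set φ1 : M ⨯ M ⟶ A ⨯ B :=
    prod.lift (prod.fst ≫ r1) (prod.snd ≫ r2) with hφ1
  -- Q1 = {(n, (m, m')) | r n = (r1 m, r2 m')}
  set qn := pullback.fst r φ1 with hqn
  set qp := pullback.snd r φ1 with hqp
  have hQ1 : qn ≫ r = qp ≫ φ1 := pullback.condition
  -- the map (n, (m, m')) ↦ (r1 m', r2 m)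
  set φ2 : pullback r φ1 ⟶ A ⨯ B :=
    prod.lift (qp ≫ prod.snd ≫ r1) (qp ≫ prod.fst ≫ r2) with hφ2
  -- S = {(n', (n, (m, m'))) | r n' = (r1 m', r2 m)}
  set ν := pullback.fst r φ2 with hν
  set ρ := pullback.snd r φ2 with hρ
  have hS : ν ≫ r = ρ ≫ φ2 := pullback.condition
  set dS : pullback r φ2 ⟶ M := ρ ≫ qp ≫ prod.fst with hdS
  set cS : pullback r φ2 ⟶ M := ρ ≫ qp ≫ prod.snd with hcS
  -- (dS, cS) is a reflexive relation on M
  have hlift : prod.lift dS cS = ρ ≫ qp := by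
    apply Limits.prod.hom_ext <;> simp [hdS, hcS]
  have hmono : Mono (prod.lift dS cS) := by
    rw [hlift]
    constructor
    intro T' s t h
    have hsρ : s ≫ ρ = t ≫ ρ := by
      apply pullback.hom_ext
      · rw [← cancel_mono r]
        simp only [Category.assoc, ← hqn, ← hqp, hQ1]
        rw [reassoc_of% h]
      · simpa only [Category.assoc, ← hqp] using h
    have hsν : s ≫ ν = t ≫ ν := by
      rw [← cancel_mono r]
      simp only [Category.assoc, ← hν, ← hρ, hS]
      rw [reassoc_of% hsρ]
    apply pullback.hom_ext
    · simpa only [← hν, Category.assoc] using hsν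
    · simpa only [← hρ, Category.assoc] using hsρ
  have hφ1fst : φ1 ≫ prod.fst = prod.fst ≫ r1 := prod.lift_fst _ _
  have hφ1snd : φ1 ≫ prod.snd = prod.snd ≫ r2 := prod.lift_snd _ _
  -- reflexivity
  have hinner_cond : 𝟙 M ≫ r = prod.lift (𝟙 M) (𝟙 M) ≫ φ1 := by
    apply Limits.prod.hom_ext <;> simp [hrdef, hφ1]
  set inner : M ⟶ pullback r φ1 :=
    pullback.lift (𝟙 M) (prod.lift (𝟙 M) (𝟙 M)) hinner_cond with hinner
  have hinner_qp : inner ≫ qp = prod.lift (𝟙 M) (𝟙 M) := pullback.lift_snd _ _ _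
  have heS_cond : 𝟙 M ≫ r = inner ≫ φ2 := by
    apply Limits.prod.hom_ext <;>
      simp [hrdef, hφ2, reassoc_of% hinner_qp]
  set eS : M ⟶ pullback r φ2 := pullback.lift (𝟙 M) inner heS_cond with heS
  have heSρ : eS ≫ ρ = inner := pullback.lift_snd _ _ _
  have hed : eS ≫ dS = 𝟙 M := by
    rw [hdS, reassoc_of% heSρ, reassoc_of% hinner_qp]; simp
  have hec : eS ≫ cS = 𝟙 M := by
    rw [hcS, reassoc_of% heSρ, reassoc_of% hinner_qp]; simp
  obtain ⟨-, -, τ, hτd, hτc⟩ := maltsev dS cS ⟨hmono, eS, hed, hec⟩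
  -- the element σ1 = ((m1, m2), n = m1, n' = m2)
  have hσ1inner_cond : m1 ≫ r = prod.lift m1 m2 ≫ φ1 := by
    apply Limits.prod.hom_ext <;> simp [hrdef, hφ1, h12]
  set σ1inner : T ⟶ pullback r φ1 :=
    pullback.lift m1 (prod.lift m1 m2) hσ1inner_cond with hσ1inner
  have hσ1inner_qp : σ1inner ≫ qp = prod.lift m1 m2 := pullback.lift_snd _ _ _
  have hσ1_cond : m2 ≫ r = σ1inner ≫ φ2 := by
    apply Limits.prod.hom_ext <;>
      simp [hrdef, hφ2, reassoc_of% hσ1inner_qp, h12]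
  set σ1 : T ⟶ pullback r φ2 := pullback.lift m2 σ1inner hσ1_cond with hσ1
  have hσ1ρ : σ1 ≫ ρ = σ1inner := pullback.lift_snd _ _ _
  have hσ1d : σ1 ≫ dS = m1 := by
    rw [hdS, reassoc_of% hσ1ρ, reassoc_of% hσ1inner_qp]; simp
  have hσ1c : σ1 ≫ cS = m2 := by
    rw [hcS, reassoc_of% hσ1ρ, reassoc_of% hσ1inner_qp]; simp
  -- the element σ2 = ((m2, m3), n = m3, n' = m2)
  have hσ2inner_cond : m3 ≫ r = prod.lift m2 m3 ≫ φ1 := by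
    apply Limits.prod.hom_ext <;> simp [hrdef, hφ1, h23]
  set σ2inner : T ⟶ pullback r φ1 :=
    pullback.lift m3 (prod.lift m2 m3) hσ2inner_cond with hσ2inner
  have hσ2inner_qp : σ2inner ≫ qp = prod.lift m2 m3 := pullback.lift_snd _ _ _
  have hσ2_cond : m2 ≫ r = σ2inner ≫ φ2 := by
    apply Limits.prod.hom_ext <;>
      simp [hrdef, hφ2, reassoc_of% hσ2inner_qp, h23]
  set σ2 : T ⟶ pullback r φ2 := pullback.lift m2 σ2inner hσ2_cond with hσ2
  have hσ2ρ : σ2 ≫ ρ = σ2inner := pullback.lift_snd _ _ _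
  have hσ2d : σ2 ≫ dS = m2 := by
    rw [hdS, reassoc_of% hσ2ρ, reassoc_of% hσ2inner_qp]; simp
  have hσ2c : σ2 ≫ cS = m3 := by
    rw [hcS, reassoc_of% hσ2ρ, reassoc_of% hσ2inner_qp]; simp
  -- apply transitivity
  set π : T ⟶ pullback cS dS :=
    pullback.lift σ1 σ2 (by rw [hσ1c, hσ2d]) with hπ
  set w : T ⟶ pullback r φ2 := π ≫ τ with hw
  have hwd : w ≫ dS = m1 := by
    rw [hw, Category.assoc, hτd, hπ, reassoc_of% (pullback.lift_fst σ1 σ2 _), hσ1d]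
  have hwc : w ≫ cS = m3 := by
    rw [hw, Category.assoc, hτc, hπ, reassoc_of% (pullback.lift_snd σ1 σ2 _), hσ2c]
  -- extract the witness
  refine ⟨w ≫ ρ ≫ qn, ?_, ?_⟩
  · have : qn ≫ r1 = qp ≫ prod.fst ≫ r1 := by
      have := hQ1 =≫ (prod.fst : A ⨯ B ⟶ A)
      simpa [hrdef, hφ1, Category.assoc] using this
    rw [← hwd, hdS]
    simp only [Category.assoc]
    rw [this]
  · have : qn ≫ r2 = qp ≫ prod.snd ≫ r2 := by
      have := hQ1 =≫ (prod.snd : A ⨯ B ⟶ B)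
      simpa [hrdef, hφ1, Category.assoc] using this
    rw [← hwc, hcS]
    simp only [Category.assoc]
    rw [this]

end Auxiliary

/-- In a pointed exact Mal'tsev category, ideals and kernels coincide: a monomorphism
`i : I ⟶ Y` is an ideal if and only if it is a kernel of some morphism.  Here "Mal'tsev"
means that every internal reflexive relation is an internal equivalence relation, and
"exact" means that every internal equivalence relation is effective, i.e. a kernel pair. -/
theorem isIdeal_iff_kernel_of_exact_maltsev {C : Type u} [Category.{v} C]
    [HasZeroObject C] [HasZeroMorphisms C] [RegularCategory C]
    (maltsev : ∀ {R X : C} (d c : R ⟶ X), IsReflexiveRelation d c →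
      _root_.IsEquivalenceRelation d c)
    (exact : ∀ {R X : C} (d c : R ⟶ X), _root_.IsEquivalenceRelation d c →
      ∃ (Z : C) (f : X ⟶ Z), IsKernelPair f d c)
    {I Y : C} (i : I ⟶ Y) (hm : Mono i) :
    IsIdeal i ↔
      ∃ (Z : C) (f : Y ⟶ Z) (w : i ≫ f = 0), Nonempty (IsLimit (KernelFork.ofι i w)) := by
  haveI := hm
  constructor
  · rintro ⟨-, K, X, k, p, q, ⟨hkmono, R, d, c, e, hRmono, hed, hec, l, hzc⟩,
      ⟨hp⟩, ⟨hq⟩, hcomm⟩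
    have hld : l ≫ d = 0 := by
      have := hzc.w =≫ (prod.fst : X ⨯ X ⟶ X)
      simpa using this
    have hlc : l ≫ c = k := by
      have := hzc.w =≫ (prod.snd : X ⨯ X ⟶ X)
      simpa using this
    -- R is effective
    obtain ⟨W, φ, hkpφ⟩ := exact d c (maltsev d c ⟨hRmono, e, hed, hec⟩)
    -- the image S of R under p × p
    obtain ⟨S, e', m, ⟨hre'⟩, hmmono, hem⟩ := exists_image (prod.lift (d ≫ p) (c ≫ p))
    set d' := m ≫ prod.fst with hd'
    set c' := m ≫ prod.snd with hc'
    have hm_eq : prod.lift d' c' = m := by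
      apply Limits.prod.hom_ext <;> simp [hd', hc']
    have hed' : e' ≫ d' = d ≫ p := by
      rw [hd', ← Category.assoc, hem]; simp
    have hec' : e' ≫ c' = c ≫ p := by
      rw [hc', ← Category.assoc, hem]; simp
    -- S is reflexive
    haveI := RegularEpi.epi p hp
    have hee'm : e ≫ e' ≫ m = prod.lift p p := by
      rw [hem]
      apply Limits.prod.hom_ext <;> simp [reassoc_of% hed, reassoc_of% hec]
    have hcoeq1 : (hp.left : hp.W ⟶ X) ≫ (e ≫ e') =
        hp.right ≫ (e ≫ e') := by
      rw [← cancel_mono m]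
      simp only [Category.assoc]
      rw [hee'm, prod.comp_lift, prod.comp_lift, hp.w]
    obtain ⟨e'', he''⟩ := RegularEpi.desc' hp (e ≫ e') hcoeq1
    have he''d : e'' ≫ d' = 𝟙 Y := by
      rw [← cancel_epi p, ← Category.assoc, he'', Category.assoc, hed',
        reassoc_of% hed, Category.comp_id]
    have he''c : e'' ≫ c' = 𝟙 Y := by
      rw [← cancel_epi p, ← Category.assoc, he'', Category.assoc, hec',
        reassoc_of% hec, Category.comp_id]
    -- S is effective
    have hmono' : Mono (prod.lift d' c') := by rw [hm_eq]; exact hmmono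
    obtain ⟨Z, f, hkpf⟩ := exact d' c' (maltsev d' c' ⟨hmono', e'', he''d, he''c⟩)
    -- i lands in the zero-class of S
    haveI := RegularEpi.epi q hq
    have hle'm : l ≫ e' ≫ m = prod.lift 0 (q ≫ i) := by
      rw [hem]
      apply Limits.prod.hom_ext <;>
        simp [reassoc_of% hld, reassoc_of% hlc, hcomm]
    have hcoeq2 : (hq.left : hq.W ⟶ K) ≫ (l ≫ e') =
        hq.right ≫ (l ≫ e') := by
      rw [← cancel_mono m]
      simp only [Category.assoc]
      rw [hle'm, prod.comp_lift, prod.comp_lift]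
      simp [RegularEpi.w_assoc]
    obtain ⟨l', hl'⟩ := RegularEpi.desc' hq (l ≫ e') hcoeq2
    have hl'd : l' ≫ d' = 0 := by
      rw [← cancel_epi q, ← Category.assoc, hl', Category.assoc, hed',
        reassoc_of% hld, zero_comp, comp_zero]
    have hl'c : l' ≫ c' = i := by
      rw [← cancel_epi q, ← Category.assoc, hl', Category.assoc, hec',
        reassoc_of% hlc, hcomm]
    have w0 : i ≫ f = 0 := by
      rw [← hl'c, Category.assoc, ← hkpf.w, reassoc_of% hl'd, zero_comp]
    -- i is the kernel of f
    have key : ∀ {T : C} (a : T ⟶ Y), a ≫ f = 0 → ∃ u : T ⟶ I, u ≫ i = a := by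
      intro T a ha
      have hcone : (0 : T ⟶ Y) ≫ f = a ≫ f := by rw [zero_comp, ha]
      set t := hkpf.lift 0 a hcone with htdef
      have ht1 : t ≫ d' = 0 := hkpf.lift_fst _ _ _
      have ht2 : t ≫ c' = a := hkpf.lift_snd _ _ _
      -- first cover
      obtain ⟨hc1⟩ := RegularCategory.regularEpiStable e' t
        (pullback.fst e' t) (pullback.snd e' t) (IsPullback.of_hasPullback e' t) ⟨hre'⟩
      set c1 := pullback.snd e' t with hc1def
      set r0 := pullback.fst e' t with hr0def
      have hcond1 : r0 ≫ e' = c1 ≫ t := pullback.condition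
      have ha0p : (r0 ≫ d) ≫ p = 0 := by
        rw [Category.assoc, ← hed', ← Category.assoc, hcond1, Category.assoc,
          ht1, comp_zero]
      have hb0p : (r0 ≫ c) ≫ p = c1 ≫ a := by
        rw [Category.assoc, ← hec', ← Category.assoc, hcond1, Category.assoc, ht2]
      have hφeq : (r0 ≫ d) ≫ φ = (r0 ≫ c) ≫ φ := by
        rw [Category.assoc, Category.assoc, hkpφ.w]
      -- the image of (φ, p)
      obtain ⟨Mθ, eθ, mθ, ⟨hreθ⟩, hmθ, hemθ⟩ := exists_image (prod.lift φ p)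
      set r1θ := mθ ≫ prod.fst with hr1θ
      set r2θ := mθ ≫ prod.snd with hr2θ
      have hmθeq : prod.lift r1θ r2θ = mθ := by
        apply Limits.prod.hom_ext <;> simp [hr1θ, hr2θ]
      have hθ1 : ∀ {T' : C} (x : T' ⟶ X), (x ≫ eθ) ≫ r1θ = x ≫ φ := by
        intro T' x
        simp only [hr1θ, Category.assoc]
        rw [reassoc_of% hemθ]
        simp
      have hθ2 : ∀ {T' : C} (x : T' ⟶ X), (x ≫ eθ) ≫ r2θ = x ≫ p := by
        intro T' x
        simp only [hr2θ, Category.assoc]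
        rw [reassoc_of% hemθ]
        simp
      -- difunctionality
      have h12' : ((0 : _ ⟶ X) ≫ eθ) ≫ r2θ = ((r0 ≫ d) ≫ eθ) ≫ r2θ := by
        rw [hθ2, hθ2, zero_comp, ha0p]
      have h23' : ((r0 ≫ d) ≫ eθ) ≫ r1θ = ((r0 ≫ c) ≫ eθ) ≫ r1θ := by
        rw [hθ1, hθ1, hφeq]
      have hmonoθ : Mono (prod.lift r1θ r2θ) := by rw [hmθeq]; exact hmθ
      obtain ⟨m4, h41, h42⟩ := maltsev_difunctional maltsev r1θ r2θ hmonoθ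
        ((0 : _ ⟶ X) ≫ eθ) ((r0 ≫ d) ≫ eθ) ((r0 ≫ c) ≫ eθ) h12' h23'
      have h41' : m4 ≫ r1θ = 0 := by rw [h41, hθ1, zero_comp]
      have h42' : m4 ≫ r2θ = c1 ≫ a := by rw [h42, hθ2, hb0p]
      -- second cover
      obtain ⟨hc2⟩ := RegularCategory.regularEpiStable eθ m4
        (pullback.fst eθ m4) (pullback.snd eθ m4) (IsPullback.of_hasPullback eθ m4) ⟨hreθ⟩
      set c2 := pullback.snd eθ m4 with hc2def
      set x := pullback.fst eθ m4 with hxdef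
      have hcond2 : x ≫ eθ = c2 ≫ m4 := pullback.condition
      have hxφ : x ≫ φ = 0 := by
        rw [← hθ1 x, hcond2, Category.assoc, h41', comp_zero]
      have hxp : x ≫ p = c2 ≫ c1 ≫ a := by
        rw [← hθ2 x, hcond2, Category.assoc, h42']
      -- lift into R, then K, then I
      have hconeφ : (0 : _ ⟶ X) ≫ φ = x ≫ φ := by rw [zero_comp, hxφ]
      set ρ' := hkpφ.lift 0 x hconeφ with hρ'def
      have hρ'd : ρ' ≫ d = 0 := hkpφ.lift_fst _ _ _
      have hρ'c : ρ' ≫ c = x := hkpφ.lift_snd _ _ _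
      have hconeK : ρ' ≫ prod.lift d c = x ≫ prod.lift (0 : X ⟶ X) (𝟙 X) := by
        apply Limits.prod.hom_ext <;> simp [hρ'd, hρ'c]
      set u2 := hzc.lift ρ' x hconeK with hu2def
      have hu2k : u2 ≫ k = x := hzc.lift_snd _ _ _
      have hv : (u2 ≫ q) ≫ i = c2 ≫ c1 ≫ a := by
        rw [Category.assoc, hcomm, ← Category.assoc, hu2k, hxp]
      obtain ⟨v1, hv1⟩ := descend_regularEpi c2 hc2 i hm (u2 ≫ q) (c1 ≫ a) hv
      obtain ⟨u, hu⟩ := descend_regularEpi c1 hc1 i hm v1 a hv1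
      exact ⟨u, hu⟩
    exact ⟨Z, f, w0, ⟨KernelFork.IsLimit.ofι' i w0
      (fun {T} a ha => ⟨(key a ha).choose, (key a ha).choose_spec⟩)⟩⟩
  · rintro ⟨Z, f, w, ⟨hlim⟩⟩
    refine ⟨hm, I, Y, i, 𝟙 Y, 𝟙 I, ?_, ⟨RegularEpi.ofIso (Iso.refl Y)⟩, ⟨RegularEpi.ofIso (Iso.refl I)⟩, by simp⟩
    refine ⟨hm, pullback f f, pullback.fst f f, pullback.snd f f,
      pullback.lift (𝟙 Y) (𝟙 Y) rfl, ?_, by simp, by simp, ?_⟩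
    · constructor
      intro T u v h
      apply pullback.hom_ext
      · have := h =≫ (prod.fst : Y ⨯ Y ⟶ Y); simpa using this
      · have := h =≫ (prod.snd : Y ⨯ Y ⟶ Y); simpa using this
    · have hlcond : (0 : I ⟶ Y) ≫ f = i ≫ f := by rw [zero_comp, w]
      refine ⟨pullback.lift 0 i hlcond, ?_⟩
      have comm : pullback.lift 0 i hlcond ≫
            prod.lift (pullback.fst f f) (pullback.snd f f)
          = i ≫ prod.lift (0 : Y ⟶ Y) (𝟙 Y) := by
        apply Limits.prod.hom_ext <;> simp
      have hfst : ∀ s : PullbackCone (prod.lift (pullback.fst f f) (pullback.snd f f))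
          (prod.lift (0 : Y ⟶ Y) (𝟙 Y)), s.fst ≫ pullback.fst f f = 0 := by
        intro s
        have := s.condition =≫ (prod.fst : Y ⨯ Y ⟶ Y)
        simpa using this
      have hsnd : ∀ s : PullbackCone (prod.lift (pullback.fst f f) (pullback.snd f f))
          (prod.lift (0 : Y ⟶ Y) (𝟙 Y)), s.fst ≫ pullback.snd f f = s.snd := by
        intro s
        have := s.condition =≫ (prod.snd : Y ⨯ Y ⟶ Y)
        simpa using this
      have hker : ∀ s : PullbackCone (prod.lift (pullback.fst f f) (pullback.snd f f))
          (prod.lift (0 : Y ⟶ Y) (𝟙 Y)), s.snd ≫ f = 0 := by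
        intro s
        rw [← hsnd s, Category.assoc, ← pullback.condition, ← Category.assoc,
          hfst s, zero_comp]
      refine IsPullback.of_isLimit (PullbackCone.IsLimit.mk comm
        (fun s => (KernelFork.IsLimit.lift' hlim s.snd (hker s)).1)
        (fun s => ?_) (fun s => (KernelFork.IsLimit.lift' hlim s.snd (hker s)).2)
        (fun s m' h1 h2 => ?_))
      · apply pullback.hom_ext
        · rw [Category.assoc, pullback.lift_fst, comp_zero, hfst s]
        · have hl2 := (KernelFork.IsLimit.lift' hlim s.snd (hker s)).2
          simp only [KernelFork.ι_ofι] at hl2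
          rw [Category.assoc, pullback.lift_snd, hsnd s]
          exact hl2
      · have hl2 := (KernelFork.IsLimit.lift' hlim s.snd (hker s)).2
        simp only [KernelFork.ι_ofι] at hl2
        rw [← cancel_mono i, h2]
        exact hl2.symm
end
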